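/- arXiv:0712.3287 — 3 statements merged into one kernel-verified Lean document; each statement's English description precedes it below -/
import Mathlib

section
/- There is a continuous linear map N : L¹(ℝ^d, ℓ) → L¹(X, μ), f ↦ N_f, such that for every f ∈ L¹(ℝ^d, ℓ): (i) ‖N_f‖_{L¹(X,μ)} ≤ √2 · I · ‖f‖_{L¹(ℝ^d,ℓ)}, and (ii) N_f(Λ) = Σ_{x∈Λ} f(x) for μ-almost every Λ ∈ X. Moreover this map agrees with the counting functions on bounded measurable compactly supported functions. -/
open MeasureTheory Filter Topology Set
open scoped RealInnerProductSpace ENNReal NNReal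

noncomputable section

/-- The ambient space `ℝ^d`. -/
abbrev Vd (d : ℕ) := EuclideanSpace ℝ (Fin d)

/-- The open cube `C_R = (−R/2, R/2)^d`. -/
def cube (d : ℕ) (R : ℝ) : Set (Vd d) := {x | ∀ i, |x i| < R / 2}

/-- Translation of a subset of `ℝ^d` by `t`. -/
def tr {d : ℕ} (t : Vd d) (Λ : Set (Vd d)) : Set (Vd d) := (fun x => t + x) '' Λ

/-- `Λ` is `r`-uniformly discrete: every translate of the cube `C_r` contains at most one point. -/
def UD {d : ℕ} (r : ℝ) (Λ : Set (Vd d)) : Prop :=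
  ∀ a : Vd d, (Λ ∩ tr a (cube d r)).Subsingleton

/-- The counting function `N_f(Λ) = ∑_{x ∈ Λ} f x`. -/
def Nf {d : ℕ} (f : Vd d → ℂ) (Λ : Set (Vd d)) : ℂ := ∑' x : Λ, f (x : Vd d)

/-- The vague topology on point sets: the initial topology for the maps
`Λ ↦ ∑_{x ∈ Λ} f x`, `f` continuous with compact support. -/
def vagueTop (d : ℕ) : TopologicalSpace (Set (Vd d)) :=
  ⨅ (f : Vd d → ℂ) (_ : Continuous f) (_ : HasCompactSupport f),
    TopologicalSpace.induced (fun Λ => Nf f Λ) inferInstance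

instance (priority := 2000) instTopConfig (d : ℕ) : TopologicalSpace (Set (Vd d)) := vagueTop d
instance (priority := 2000) instMeasConfig (d : ℕ) : MeasurableSpace (Set (Vd d)) := borel _
instance (priority := 2000) instBorelConfig (d : ℕ) : BorelSpace (Set (Vd d)) := ⟨rfl⟩

/-- A uniformly discrete stationary ergodic point process with hull `X`,
law `μ` and intensity `I`. -/
structure IsPointProcess (d : ℕ) (r : ℝ) (X : Set (Set (Vd d)))
    (μ : Measure (Set (Vd d))) (I : ℝ≥0) : Prop where
  nonempty : X.Nonempty
  closedX : IsClosed X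
  invX : ∀ t : Vd d, tr t '' X = X
  ud : ∀ Λ ∈ X, UD r Λ
  prob : IsProbabilityMeasure μ
  suppX : μ Xᶜ = 0
  stationary : ∀ t : Vd d, μ.map (tr t) = μ
  ergodic : ∀ D : Set (Set (Vd d)), MeasurableSet D → (∀ t : Vd d, tr t '' D = D) →
    μ D = 0 ∨ μ D = 1
  Ipos : 0 < I
  intensity : ∀ A : Set (Vd d), MeasurableSet A →
    ∫⁻ Λ, ((Λ ∩ A).encard : ℝ≥0∞) ∂μ = (I : ℝ≥0∞) * volume A

/-- The Palm measure of `μ`: the finite measure `μ̇` with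
`ℓ(B)·μ̇(D) = ∫_X ∑_{x ∈ Λ ∩ B} 1_D(−x+Λ) dμ(Λ)`. -/
def IsPalm {d : ℕ} (μ μp : Measure (Set (Vd d))) : Prop :=
  IsFiniteMeasure μp ∧
  ∀ D : Set (Set (Vd d)), MeasurableSet D → ∀ B : Set (Vd d), MeasurableSet B →
    0 < volume B → volume B < ⊤ →
    volume B * μp D =
      ∫⁻ Λ, ∑' x : ↥(Λ ∩ B), D.indicator (fun _ => (1 : ℝ≥0∞)) (tr (-(x : Vd d)) Λ) ∂μ

/-- `μ1` is the first moment of the Palm measure `μp`. -/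
def IsFirstMoment {d : ℕ} (μp : Measure (Set (Vd d))) (μ1 : Measure (Vd d)) : Prop :=
  ∀ f : Vd d → ℂ, Continuous f → HasCompactSupport f →
    ∫ x, f x ∂μ1 = ∫ Λ, Nf f Λ ∂μp

/-- The character `x ↦ e^{2πi k·x}`. -/
def char {d : ℕ} (k x : Vd d) : ℂ :=
  Complex.exp (2 * Real.pi * Complex.I * ((⟪k, x⟫ : ℝ) : ℂ))

/-- The Fourier transform `f̂(y) = ∫ f(x) e^{−2πi x·y} dx`. -/
def fint {d : ℕ} (f : Vd d → ℂ) (y : Vd d) : ℂ := ∫ x, char x (-y) * f x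


namespace CountingAux

variable {d : ℕ}

lemma cube_isOpen (R : ℝ) : IsOpen (cube d R) := by
  have : cube d R = ⋂ i, {x : Vd d | |x i| < R / 2} := by
    ext x; simp [cube, Set.mem_iInter]
  rw [this]
  refine isOpen_iInter_of_finite fun i => ?_
  have hc : Continuous fun x : Vd d => |x i| :=
    ((continuous_apply i).comp' (PiLp.continuous_ofLp (p := 2) (β := fun _ : Fin d => ℝ))).abs
  exact isOpen_lt hc continuous_const

lemma cube_mem_zero {R : ℝ} (hR : 0 < R) : (0 : Vd d) ∈ cube d R := by
  intro i
  simpa using by positivity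

lemma abs_coord_le_norm (x : Vd d) (i : Fin d) : |x i| ≤ ‖x‖ := by
  rw [EuclideanSpace.norm_eq]
  have h1 : |x i| = Real.sqrt (‖x i‖ ^ 2) := by
    rw [Real.sqrt_sq_eq_abs, Real.norm_eq_abs, abs_abs]
  rw [h1]
  refine Real.sqrt_le_sqrt ?_
  exact Finset.single_le_sum (f := fun j => ‖x j‖ ^ 2) (fun j _ => sq_nonneg _)
    (Finset.mem_univ i)

lemma cube_bounded (R : ℝ) : Bornology.IsBounded (cube d R) := by
  rw [Metric.isBounded_iff_subset_closedBall 0]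
  refine ⟨Real.sqrt (d * (|R| / 2) ^ 2), fun x hx => ?_⟩
  rw [Metric.mem_closedBall, dist_zero_right, EuclideanSpace.norm_eq]
  refine Real.sqrt_le_sqrt ?_
  calc ∑ i, ‖x i‖ ^ 2 ≤ ∑ _i : Fin d, (|R| / 2) ^ 2 := by
        refine Finset.sum_le_sum fun i _ => ?_
        have h1 : |x i| ≤ |R| / 2 := le_trans (hx i).le (by
          have := le_abs_self R; linarith)
        rw [Real.norm_eq_abs]
        exact pow_le_pow_left₀ (abs_nonneg _) h1 2
    _ = d * (|R| / 2) ^ 2 := by simp [Finset.sum_const, nsmul_eq_mul]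

lemma mem_cube_of_big {x : Vd d} {m : ℕ} (hm : 2 * ‖x‖ + 1 ≤ m) : x ∈ cube d m := by
  intro i
  have h1 : |x i| ≤ ‖x‖ := abs_coord_le_norm x i
  have h2 : (0:ℝ) ≤ ‖x‖ := norm_nonneg _
  have : (2 * ‖x‖ + 1) / 2 ≤ (m : ℝ) / 2 := by linarith
  linarith [this]

lemma cube_compl_nonempty (hd : 0 < d) (m : ℕ) : ((cube d m)ᶜ : Set (Vd d)).Nonempty := by
  refine ⟨EuclideanSpace.single ⟨0, hd⟩ (m : ℝ), fun h => ?_⟩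
  have := h ⟨0, hd⟩
  rw [EuclideanSpace.single_apply] at this
  simp only [if_pos rfl] at this
  rw [abs_of_nonneg (by positivity)] at this
  have : (m:ℝ) < m := lt_of_lt_of_le this (by linarith [Nat.cast_nonneg (α := ℝ) m])
  exact lt_irrefl _ this

lemma tr_isOpen (a : Vd d) {U : Set (Vd d)} (hU : IsOpen U) : IsOpen (tr a U) :=
  (Homeomorph.addLeft a).isOpenMap U hU

lemma finite_inter_compact {r : ℝ} (hr : 0 < r) {Λ : Set (Vd d)}
    (h : UD r Λ) {K : Set (Vd d)} (hK : IsCompact K) : (Λ ∩ K).Finite := by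
  have hcover : K ⊆ ⋃ a ∈ K, tr a (cube d r) := by
    intro x hx
    exact Set.mem_biUnion hx ⟨0, cube_mem_zero hr, by simp⟩
  obtain ⟨t, -, htf, hcov⟩ := hK.elim_finite_subcover_image
    (fun a _ => tr_isOpen a (cube_isOpen r)) hcover
  have hsub : Λ ∩ K ⊆ ⋃ a ∈ t, Λ ∩ tr a (cube d r) := by
    intro x hx
    obtain ⟨a, hat, hxa⟩ := Set.mem_iUnion₂.mp (hcov hx.2)
    exact Set.mem_iUnion₂.mpr ⟨a, hat, hx.1, hxa⟩
  exact (htf.biUnion fun a _ => (h a).finite).subset hsub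

end CountingAux
namespace CountingAux

variable {d : ℕ}

/-- ℝ≥0∞-valued counting sum. -/
def S (g : Vd d → ℝ≥0∞) (Λ : Set (Vd d)) : ℝ≥0∞ := ∑' x : Vd d, Λ.indicator g x

lemma S_eq_subtype (g : Vd d → ℝ≥0∞) (Λ : Set (Vd d)) : S g Λ = ∑' x : Λ, g x :=
  (tsum_subtype Λ g).symm

lemma S_mono {g₁ g₂ : Vd d → ℝ≥0∞} (h : ∀ x, g₁ x ≤ g₂ x) (Λ : Set (Vd d)) :
    S g₁ Λ ≤ S g₂ Λ :=
  ENNReal.tsum_le_tsum fun x => Set.indicator_le_indicator' fun _ => h x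

lemma S_add (g₁ g₂ : Vd d → ℝ≥0∞) (Λ : Set (Vd d)) :
    S (g₁ + g₂) Λ = S g₁ Λ + S g₂ Λ := by
  simp only [S]
  rw [← ENNReal.tsum_add]
  refine tsum_congr fun x => ?_
  by_cases hx : x ∈ Λ <;> simp [S, Set.indicator_of_mem, Set.indicator_of_notMem, hx]

lemma S_mul (c : ℝ≥0∞) (g : Vd d → ℝ≥0∞) (Λ : Set (Vd d)) :
    S (fun x => c * g x) Λ = c * S g Λ := by
  rw [S, S, ← ENNReal.tsum_mul_left]
  refine tsum_congr fun x => ?_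
  by_cases hx : x ∈ Λ <;> simp [Set.indicator_of_mem, Set.indicator_of_notMem, hx]

lemma tsum_iSup_mono {ι : Type*} (h : ℕ → ι → ℝ≥0∞) (hm : Monotone h) :
    ∑' i, ⨆ n, h n i = ⨆ n, ∑' i, h n i := by
  simp only [ENNReal.tsum_eq_iSup_sum]
  rw [iSup_comm]
  refine iSup_congr fun s => ?_
  exact ENNReal.finsetSum_iSup_of_monotone fun i a b hab => hm hab i

lemma S_iSup {h : ℕ → Vd d → ℝ≥0∞} (hm : Monotone h) (Λ : Set (Vd d)) :
    S (fun x => ⨆ n, h n x) Λ = ⨆ n, S (h n) Λ := by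
  rw [S]
  have : ∀ x, Λ.indicator (fun x => ⨆ n, h n x) x = ⨆ n, Λ.indicator (h n) x := by
    intro x
    by_cases hx : x ∈ Λ <;>
      simp [Set.indicator_of_mem, Set.indicator_of_notMem, hx]
  rw [tsum_congr this, tsum_iSup_mono]
  · rfl
  · intro a b hab x
    by_cases hx : x ∈ Λ
    · simpa [Set.indicator_of_mem, hx] using hm hab x
    · simp [Set.indicator_of_notMem, hx]

lemma S_indicator_one (A Λ : Set (Vd d)) :
    S (A.indicator fun _ => (1 : ℝ≥0∞)) Λ = ((Λ ∩ A).encard : ℝ≥0∞) := by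
  rw [← ENNReal.tsum_set_one, tsum_subtype (Λ ∩ A) (fun _ => (1:ℝ≥0∞)), S]
  refine tsum_congr fun x => ?_
  by_cases hx : x ∈ Λ <;> by_cases hA : x ∈ A <;>
    simp [Set.indicator_of_mem, Set.indicator_of_notMem, hx, hA, Set.mem_inter_iff]

end CountingAux
namespace CountingAux

variable {d : ℕ}

lemma continuous_Nf {f : Vd d → ℂ} (hc : Continuous f) (hs : HasCompactSupport f) :
    Continuous (Nf f) := by
  rw [continuous_iff_le_induced]
  show vagueTop d ≤ _
  exact iInf_le_of_le f (iInf_le_of_le hc (iInf_le _ hs))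

/-- On sets meeting the support in a finite set, `S ∘ ofReal` agrees with the complex `Nf`. -/
lemma S_ofReal_eq {g : Vd d → ℝ} (hg0 : ∀ x, 0 ≤ g x) {Λ : Set (Vd d)}
    (hfin : (Λ ∩ tsupport g).Finite) :
    S (fun x => ENNReal.ofReal (g x)) Λ = ENNReal.ofReal ((Nf (fun x => (g x : ℂ)) Λ).re) := by
  classical
  set T : Finset (Vd d) := hfin.toFinset with hT
  have key : ∀ x, x ∉ T → x ∉ Λ ∨ g x = 0 := by
    intro x hx
    by_cases hxΛ : x ∈ Λ
    · right
      by_contra hgx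
      exact hx (hfin.mem_toFinset.mpr ⟨hxΛ, subset_tsupport g (by simpa using hgx)⟩)
    · left; exact hxΛ
  have hL : S (fun x => ENNReal.ofReal (g x)) Λ
      = ∑ x ∈ T, Λ.indicator (fun x => ENNReal.ofReal (g x)) x := by
    refine tsum_eq_sum fun x hx => ?_
    rcases key x hx with h | h
    · exact Set.indicator_of_notMem h _
    · simp [Set.indicator_apply, h]
  have hR : Nf (fun x => (g x : ℂ)) Λ = ∑ x ∈ T, Λ.indicator (fun x => (g x : ℂ)) x := by
    rw [Nf, tsum_subtype Λ (fun x => (g x : ℂ))]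
    refine tsum_eq_sum fun x hx => ?_
    rcases key x hx with h | h
    · exact Set.indicator_of_notMem h _
    · simp [Set.indicator_apply, h]
  rw [hL, hR, Complex.re_sum, ENNReal.ofReal_sum_of_nonneg]
  · refine Finset.sum_congr rfl fun x _ => ?_
    by_cases hxΛ : x ∈ Λ <;> simp [Set.indicator_apply, hxΛ]
  · intro x _
    by_cases hxΛ : x ∈ Λ <;> simp [Set.indicator_apply, hxΛ, hg0 x]

end CountingAux
namespace CountingAux

variable {d : ℕ} {r : ℝ} {X : Set (Set (Vd d))} {μ : Measure (Set (Vd d))} {I : ℝ≥0}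

lemma ae_memX (hX : IsPointProcess d r X μ I) : ∀ᵐ Λ ∂μ, Λ ∈ X := by
  rw [MeasureTheory.ae_iff]
  exact hX.suppX

lemma aemeas_S_indicator_open (hX : IsPointProcess d r X μ I) (hr : 0 < r)
    {Q : Set (Vd d)} (hQ : IsOpen Q) (hQb : Bornology.IsBounded Q) (hQc : Qᶜ.Nonempty) :
    AEMeasurable (S (Q.indicator fun _ => (1 : ℝ≥0∞))) μ := by
  classical
  set f : ℕ → Vd d → ℝ := fun n x => min 1 (n * Metric.infDist x Qᶜ) with hf
  have hf0 : ∀ n x, 0 ≤ f n x := fun n x =>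
    le_min zero_le_one (mul_nonneg (Nat.cast_nonneg n) Metric.infDist_nonneg)
  have hfc : ∀ n, Continuous (f n) := fun n =>
    continuous_const.min (continuous_const.mul (Metric.continuous_infDist_pt _))
  have hfsupp : ∀ n, Function.support (f n) ⊆ Q := by
    intro n x hx
    by_contra hxQ
    have : Metric.infDist x Qᶜ = 0 := Metric.infDist_zero_of_mem hxQ
    apply hx
    simp [hf, this]
  have hfcs : ∀ n, HasCompactSupport (f n) := by
    intro n
    refine HasCompactSupport.of_support_subset_isCompact
      (hQb.isCompact_closure) ((hfsupp n).trans subset_closure)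
  have hmono : Monotone fun n => (fun x => ENNReal.ofReal (f n x)) := by
    intro a b hab x
    refine ENNReal.ofReal_le_ofReal ?_
    refine min_le_min le_rfl ?_
    have := Metric.infDist_nonneg (s := Qᶜ) (x := x)
    have : (a : ℝ) ≤ b := Nat.cast_le.mpr hab
    nlinarith [Metric.infDist_nonneg (s := Qᶜ) (x := x)]
  have hsup : ∀ x, Q.indicator (fun _ => (1 : ℝ≥0∞)) x = ⨆ n, ENNReal.ofReal (f n x) := by
    intro x
    by_cases hx : x ∈ Q
    · have hpos : 0 < Metric.infDist x Qᶜ :=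
        (hQ.isClosed_compl.notMem_iff_infDist_pos hQc).mp (by simp [hx])
      rw [Set.indicator_of_mem hx]
      refine le_antisymm ?_ ?_
      · obtain ⟨n, hn⟩ := exists_nat_ge (1 / Metric.infDist x Qᶜ)
        refine le_iSup_of_le n ?_
        have h1 : (1 : ℝ) ≤ n * Metric.infDist x Qᶜ := by
          rw [div_le_iff₀ hpos] at hn
          linarith
        simp [hf, min_eq_left h1]
      · exact iSup_le fun n => ENNReal.ofReal_le_one.mpr (min_le_left _ _)
    · have : Metric.infDist x Qᶜ = 0 := Metric.infDist_zero_of_mem hx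
      rw [Set.indicator_of_notMem hx]
      simp [hf, this]
  have hSsup : ∀ Λ, S (Q.indicator fun _ => (1 : ℝ≥0∞)) Λ
      = ⨆ n, S (fun x => ENNReal.ofReal (f n x)) Λ := by
    intro Λ
    rw [show (Q.indicator fun _ => (1:ℝ≥0∞)) = fun x => ⨆ n, ENNReal.ofReal (f n x) from
      funext hsup]
    exact S_iSup hmono Λ
  set G : Set (Vd d) → ℝ≥0∞ :=
    fun Λ => ⨆ n, ENNReal.ofReal ((Nf (fun x => ((f n x : ℝ) : ℂ)) Λ).re) with hG
  have hGmeas : Measurable G := by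
    refine Measurable.iSup fun n => ?_
    have hNf : Continuous (Nf (fun x => ((f n x : ℝ) : ℂ))) :=
      continuous_Nf (Complex.continuous_ofReal.comp (hfc n))
        ((hfcs n).comp_left (g := fun t : ℝ => (t : ℂ)) (by simp))
    exact ENNReal.measurable_ofReal.comp (Complex.continuous_re.comp hNf).measurable
  refine hGmeas.aemeasurable.congr ?_
  filter_upwards [ae_memX hX] with Λ hΛ
  rw [hSsup Λ]
  exact iSup_congr fun n =>
    (S_ofReal_eq (hf0 n) (finite_inter_compact hr (hX.ud Λ hΛ) (hfcs n))).symm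

end CountingAux
namespace CountingAux

variable {d : ℕ} {r : ℝ} {X : Set (Set (Vd d))} {μ : Measure (Set (Vd d))} {I : ℝ≥0}

lemma S_tsum {ι : Type*} (u : ι → Vd d → ℝ≥0∞) (Λ : Set (Vd d)) :
    S (fun x => ∑' i, u i x) Λ = ∑' i, S (u i) Λ := by
  rw [S]
  have h : ∀ x, Λ.indicator (fun x => ∑' i, u i x) x = ∑' i, Λ.indicator (u i) x := by
    intro x
    by_cases hx : x ∈ Λ <;>
      simp [Set.indicator_of_mem, Set.indicator_of_notMem, hx]
  rw [tsum_congr h, ENNReal.tsum_comm]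
  rfl

lemma indicator_iUnion_apply {g : ℕ → Set (Vd d)} (hdis : Pairwise (Function.onFun Disjoint g))
    (B : Set (Vd d)) (x : Vd d) :
    ((⋃ i, g i) ∩ B).indicator (fun _ => (1 : ℝ≥0∞)) x
      = ∑' i, (g i ∩ B).indicator (fun _ => (1 : ℝ≥0∞)) x := by
  by_cases hx : x ∈ (⋃ i, g i) ∩ B
  · obtain ⟨hxu, hxB⟩ := hx
    obtain ⟨i, hxi⟩ := Set.mem_iUnion.mp hxu
    rw [Set.indicator_of_mem (Set.mem_inter hxu hxB), tsum_eq_single i]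
    · simp [Set.indicator_of_mem, Set.mem_inter_iff, hxi, hxB]
    · intro j hji
      refine Set.indicator_of_notMem (fun hj => ?_) _
      exact Set.disjoint_left.mp (hdis hji) hj.1 hxi
  · rw [Set.indicator_of_notMem hx]
    symm
    rw [ENNReal.tsum_eq_zero]
    intro i
    exact Set.indicator_of_notMem
      (fun h => hx ⟨Set.mem_iUnion.mpr ⟨i, h.1⟩, h.2⟩) _

lemma cube_mono {R R' : ℝ} (h : R ≤ R') : cube d R ⊆ cube d R' := by
  intro x hx i
  exact lt_of_lt_of_le (hx i) (by linarith)

lemma aemeas_S_indicator (hd : 0 < d) (hX : IsPointProcess d r X μ I) (hr : 0 < r)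
    {A : Set (Vd d)} (hA : MeasurableSet A) :
    AEMeasurable (S (A.indicator fun _ => (1 : ℝ≥0∞))) μ := by
  classical
  -- bounded version
  have Hm : ∀ m : ℕ, ∀ A : Set (Vd d), MeasurableSet A →
      AEMeasurable (S ((A ∩ cube d m).indicator fun _ => (1 : ℝ≥0∞))) μ := by
    intro m
    have hcube : AEMeasurable (S ((cube d m).indicator fun _ => (1 : ℝ≥0∞))) μ :=
      aemeas_S_indicator_open hX hr (cube_isOpen _) (cube_bounded _)
        (cube_compl_nonempty hd m)
    intro A hA
    refine MeasurableSet.induction_on_open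
      (C := fun A _ => AEMeasurable (S ((A ∩ cube d m).indicator fun _ => (1:ℝ≥0∞))) μ)
      ?_ ?_ ?_ _ hA
    · intro U hU
      exact aemeas_S_indicator_open hX hr (hU.inter (cube_isOpen _))
          ((cube_bounded _).subset Set.inter_subset_right)
          ((cube_compl_nonempty hd m).mono
            (Set.compl_subset_compl.mpr Set.inter_subset_right))
    · intro t ht hC
      have hsplit : ∀ Λ : Set (Vd d),
          S ((t ∩ cube d m).indicator fun _ => (1:ℝ≥0∞)) Λ
            + S ((tᶜ ∩ cube d m).indicator fun _ => (1:ℝ≥0∞)) Λ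
          = S ((cube d m).indicator fun _ => (1:ℝ≥0∞)) Λ := by
        intro Λ
        rw [← S_add]
        refine congrFun (congrArg S ?_) Λ
        funext x
        by_cases hxt : x ∈ t <;> by_cases hxc : x ∈ cube d m <;>
          simp [Set.indicator_apply, Set.mem_inter_iff, hxt, hxc]
      refine AEMeasurable.congr (hcube.sub hC) ?_
      filter_upwards [ae_memX hX] with Λ hΛ
      have hfin : S ((t ∩ cube d m).indicator fun _ => (1:ℝ≥0∞)) Λ ≠ ⊤ := by
        refine ne_top_of_le_ne_top ?_
          (S_mono (fun x => Set.indicator_le_indicator_of_subset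
            Set.inter_subset_right (fun _ => zero_le) x) Λ)
        rw [S_indicator_one]
        have h1 : (Λ ∩ cube d m).encard < ⊤ :=
          ((finite_inter_compact hr (hX.ud Λ hΛ)
            ((cube_bounded (m:ℝ)).isCompact_closure)).subset
              (Set.inter_subset_inter_right _ subset_closure)).encard_lt_top
        exact (lt_of_lt_of_le (ENat.toENNReal_lt.mpr h1)
          (le_of_eq ENat.toENNReal_top)).ne
      rw [Pi.sub_apply, ← hsplit Λ, ENNReal.add_sub_cancel_left hfin]
    · intro g hdis hgm hC
      have hrw : ∀ Λ : Set (Vd d),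
          S (((⋃ i, g i) ∩ cube d m).indicator fun _ => (1:ℝ≥0∞)) Λ
          = ∑' i, S ((g i ∩ cube d m).indicator fun _ => (1:ℝ≥0∞)) Λ := by
        intro Λ
        rw [show (((⋃ i, g i) ∩ cube d m).indicator fun _ => (1:ℝ≥0∞))
            = fun x => ∑' i, ((g i ∩ cube d m).indicator (fun _ => (1:ℝ≥0∞)) x) from
          funext (indicator_iUnion_apply hdis _), S_tsum]
      refine AEMeasurable.congr (AEMeasurable.ennreal_tsum hC) ?_
      filter_upwards with Λ
      exact (hrw Λ).symm
  -- unbounded limit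
  have hsup : ∀ x, A.indicator (fun _ => (1:ℝ≥0∞)) x
      = ⨆ m : ℕ, (A ∩ cube d m).indicator (fun _ => (1:ℝ≥0∞)) x := by
    intro x
    by_cases hx : x ∈ A
    · rw [Set.indicator_of_mem hx]
      obtain ⟨m, hm⟩ := exists_nat_ge (2 * ‖x‖ + 1)
      refine le_antisymm (le_iSup_of_le m ?_) (iSup_le fun m => ?_)
      · rw [Set.indicator_of_mem (Set.mem_inter hx (mem_cube_of_big hm))]
      · exact Set.indicator_le' (fun _ _ => le_rfl) (fun _ _ => zero_le) x
    · rw [Set.indicator_of_notMem hx]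
      symm
      simp only [ENNReal.iSup_eq_zero]
      intro m
      exact Set.indicator_of_notMem (fun h => hx h.1) _
  have hmono : Monotone fun m : ℕ => (A ∩ cube d m).indicator (fun _ => (1:ℝ≥0∞)) := by
    intro a b hab
    refine Set.indicator_le_indicator_of_subset
      (Set.inter_subset_inter_right _ (cube_mono (Nat.cast_le.mpr hab))) (fun _ => zero_le)
  have : ∀ Λ, S (A.indicator fun _ => (1:ℝ≥0∞)) Λ
      = ⨆ m : ℕ, S ((A ∩ cube d m).indicator fun _ => (1:ℝ≥0∞)) Λ := by
    intro Λ
    rw [show (A.indicator fun _ => (1:ℝ≥0∞))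
        = fun x => ⨆ m : ℕ, (A ∩ cube d m).indicator (fun _ => (1:ℝ≥0∞)) x from
      funext hsup]
    exact S_iSup hmono Λ
  refine AEMeasurable.congr (AEMeasurable.iSup fun m => Hm m A hA) ?_
  filter_upwards with Λ
  exact (this Λ).symm

end CountingAux
namespace CountingAux

variable {d : ℕ} {r : ℝ} {X : Set (Set (Vd d))} {μ : Measure (Set (Vd d))} {I : ℝ≥0}

lemma campbell (hd : 0 < d) (hX : IsPointProcess d r X μ I) (hr : 0 < r)
    {g : Vd d → ℝ≥0∞} (hg : Measurable g) :
    AEMeasurable (S g) μ ∧ ∫⁻ Λ, S g Λ ∂μ = (I : ℝ≥0∞) * ∫⁻ x, g x := by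
  refine Measurable.ennreal_induction
    (motive := fun g => AEMeasurable (S g) μ ∧ ∫⁻ Λ, S g Λ ∂μ = (I : ℝ≥0∞) * ∫⁻ x, g x)
    ?_ ?_ ?_ hg
  · intro c s hs
    have hre : (s.indicator fun _ => c) = fun x => c * s.indicator (fun _ => (1:ℝ≥0∞)) x := by
      funext x
      by_cases hx : x ∈ s <;> simp [Set.indicator_apply, hx]
    have hSre : ∀ Λ, S (s.indicator fun _ => c) Λ
        = c * S (s.indicator fun _ => (1:ℝ≥0∞)) Λ := by
      intro Λ; rw [hre, S_mul]
    have ham : AEMeasurable (S (s.indicator fun _ => (1:ℝ≥0∞))) μ :=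
      aemeas_S_indicator hd hX hr hs
    constructor
    · refine (ham.const_mul c).congr ?_
      filter_upwards with Λ
      exact (hSre Λ).symm
    · have h1 : ∫⁻ Λ, S (s.indicator fun _ => c) Λ ∂μ
          = c * ∫⁻ Λ, S (s.indicator fun _ => (1:ℝ≥0∞)) Λ ∂μ := by
        rw [← lintegral_const_mul'' c ham]
        exact lintegral_congr fun Λ => hSre Λ
      have h2 : ∫⁻ Λ, S (s.indicator fun _ => (1:ℝ≥0∞)) Λ ∂μ = (I : ℝ≥0∞) * volume s := by
        rw [← hX.intensity s hs]
        exact lintegral_congr fun Λ => S_indicator_one s Λ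
      rw [h1, h2, lintegral_indicator_const hs c, mul_left_comm]
  · intro f₁ f₂ _ hf₁ hf₂ ih₁ ih₂
    constructor
    · refine (ih₁.1.add ih₂.1).congr ?_
      filter_upwards with Λ
      exact (S_add f₁ f₂ Λ).symm
    · have : ∫⁻ Λ, S (f₁ + f₂) Λ ∂μ = ∫⁻ Λ, S f₁ Λ + S f₂ Λ ∂μ :=
        lintegral_congr fun Λ => S_add f₁ f₂ Λ
      rw [this, lintegral_add_left' ih₁.1 _, ih₁.2, ih₂.2]
      simp only [Pi.add_apply]
      rw [lintegral_add_left hf₁, mul_add]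
  · intro f hmeas hmono ih
    have hSm : ∀ Λ, S (fun x => ⨆ n, f n x) Λ = ⨆ n, S (f n) Λ := fun Λ => S_iSup hmono Λ
    constructor
    · refine (AEMeasurable.iSup fun n => (ih n).1).congr ?_
      filter_upwards with Λ
      exact (hSm Λ).symm
    · have h1 : ∫⁻ Λ, S (fun x => ⨆ n, f n x) Λ ∂μ = ∫⁻ Λ, ⨆ n, S (f n) Λ ∂μ :=
        lintegral_congr fun Λ => hSm Λ
      rw [h1, lintegral_iSup' (fun n => (ih n).1) ?_]
      · rw [lintegral_iSup hmeas hmono]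
        rw [ENNReal.mul_iSup]
        exact iSup_congr fun n => (ih n).2
      · filter_upwards with Λ
        intro a b hab
        exact S_mono (fun x => hmono hab x) Λ

lemma S_ae_zero (hd : 0 < d) (hX : IsPointProcess d r X μ I) (hr : 0 < r)
    {h : Vd d → ℝ≥0∞} (h0 : h =ᵐ[volume] (0 : Vd d → ℝ≥0∞)) :
    S h =ᵐ[μ] (0 : Set (Vd d) → ℝ≥0∞) := by
  have hnull : volume {x : Vd d | h x ≠ 0} = 0 := by
    simpa [Filter.EventuallyEq, ae_iff] using h0
  obtain ⟨Z, hZsub, hZm, hZ0⟩ := exists_measurable_superset_of_null hnull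
  set h' : Vd d → ℝ≥0∞ := Z.indicator fun _ => (⊤ : ℝ≥0∞) with hh'
  have hle : ∀ x, h x ≤ h' x := by
    intro x
    by_cases hx : h x = 0
    · simp [hx]
    · rw [hh', Set.indicator_of_mem (hZsub hx)]
      exact le_top
  have hm' : Measurable h' := measurable_const.indicator hZm
  obtain ⟨ham, hint⟩ := campbell hd hX hr hm'
  have hzero : ∫⁻ Λ, S h' Λ ∂μ = 0 := by
    rw [hint, hh', lintegral_indicator_const hZm, hZ0, mul_zero, mul_zero]
  have hS0 : S h' =ᵐ[μ] 0 := (lintegral_eq_zero_iff' ham).mp hzero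
  filter_upwards [hS0] with Λ hΛ
  refine le_antisymm ?_ (zero_le)
  calc S h Λ ≤ S h' Λ := S_mono hle Λ
    _ = 0 := hΛ
end CountingAux
namespace CountingAux

variable {d : ℕ} {r : ℝ} {X : Set (Set (Vd d))} {μ : Measure (Set (Vd d))} {I : ℝ≥0}

lemma Nf_congr_ae (hd : 0 < d) (hX : IsPointProcess d r X μ I) (hr : 0 < r)
    {f₁ f₂ : Vd d → ℂ} (hfe : f₁ =ᵐ[volume] f₂) :
    Nf f₁ =ᵐ[μ] Nf f₂ := by
  have h0 : (fun x => (‖f₁ x - f₂ x‖₊ : ℝ≥0∞)) =ᵐ[volume] (0 : Vd d → ℝ≥0∞) := by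
    filter_upwards [hfe] with x hx
    simp [hx]
  filter_upwards [S_ae_zero hd hX hr h0] with Λ hΛ
  rw [S_eq_subtype] at hΛ
  have : ∀ x : Λ, f₁ (x : Vd d) = f₂ (x : Vd d) := by
    intro x
    have := ENNReal.tsum_eq_zero.mp hΛ x
    have h2 : ‖f₁ (x : Vd d) - f₂ (x : Vd d)‖₊ = 0 := by exact_mod_cast this
    rw [nnnorm_eq_zero, sub_eq_zero] at h2
    exact h2
  exact tsum_congr this

lemma nnnorm_Nf_le (f : Vd d → ℂ) (Λ : Set (Vd d)) :
    (‖Nf f Λ‖₊ : ℝ≥0∞) ≤ S (fun x => (‖f x‖₊ : ℝ≥0∞)) Λ := by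
  rw [S_eq_subtype]
  by_cases htop : ∑' x : Λ, (‖f (x : Vd d)‖₊ : ℝ≥0∞) = ⊤
  · rw [htop]; exact le_top
  · have hsumE : Summable fun x : Λ => ‖f (x : Vd d)‖₊ :=
      ENNReal.tsum_coe_ne_top_iff_summable.mp htop
    rw [← ENNReal.coe_tsum hsumE]
    exact_mod_cast nnnorm_tsum_le hsumE

lemma tsum_real_eq {ι : Type*} (v : ι → ℝ) (hv : Summable v) :
    ∑' i, v i = (∑' i, ENNReal.ofReal (max (v i) 0)).toReal
      - (∑' i, ENNReal.ofReal (max (-v i) 0)).toReal := by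
  have h1 : Summable fun i => max (v i) 0 :=
    hv.abs.of_nonneg_of_le (fun i => le_max_right _ _)
      (fun i => max_le (le_abs_self _) (abs_nonneg _))
  have h2 : Summable fun i => max (-v i) 0 :=
    hv.abs.of_nonneg_of_le (fun i => le_max_right _ _)
      (fun i => max_le (by rw [abs_eq_max_neg]; exact le_max_right _ _) (abs_nonneg _))
  have e1 : (∑' i, ENNReal.ofReal (max (v i) 0)).toReal = ∑' i, max (v i) 0 := by
    rw [← ENNReal.ofReal_tsum_of_nonneg (fun i => le_max_right _ _) h1,
      ENNReal.toReal_ofReal (tsum_nonneg fun i => le_max_right _ _)]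
  have e2 : (∑' i, ENNReal.ofReal (max (-v i) 0)).toReal = ∑' i, max (-v i) 0 := by
    rw [← ENNReal.ofReal_tsum_of_nonneg (fun i => le_max_right _ _) h2,
      ENNReal.toReal_ofReal (tsum_nonneg fun i => le_max_right _ _)]
  rw [e1, e2, ← Summable.tsum_sub h1 h2]
  exact tsum_congr fun i => (max_zero_sub_max_neg_zero_eq_self (v i)).symm

lemma aestronglyMeasurable_Nf (hd : 0 < d) (hX : IsPointProcess d r X μ I) (hr : 0 < r)
    {g : Vd d → ℂ} (hg : Measurable g) (hgi : Integrable g volume) :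
    AEStronglyMeasurable (Nf g) μ := by
  set gE : Vd d → ℝ≥0∞ := fun x => (‖g x‖₊ : ℝ≥0∞) with hgE
  obtain ⟨hamE, hintE⟩ := campbell hd hX hr hg.nnnorm.coe_nnreal_ennreal
  have hfinI : ∫⁻ Λ, S gE Λ ∂μ ≠ ⊤ := by
    rw [hintE]
    exact (ENNReal.mul_lt_top ENNReal.coe_lt_top hgi.2).ne
  have hae : ∀ᵐ Λ ∂μ, S gE Λ < ⊤ := ae_lt_top' hamE hfinI
  set p : Fin 4 → Vd d → ℝ≥0∞ :=
    ![fun x => ENNReal.ofReal (max (g x).re 0),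
      fun x => ENNReal.ofReal (max (-(g x).re) 0),
      fun x => ENNReal.ofReal (max (g x).im 0),
      fun x => ENNReal.ofReal (max (-(g x).im) 0)] with hp
  have hpm : ∀ k, Measurable (p k) := by
    intro k
    fin_cases k <;>
      simp only [hp, Matrix.cons_val_zero, Matrix.cons_val_one, Matrix.head_cons,
        Matrix.cons_val_two, Matrix.tail_cons, Matrix.cons_val_three] <;>
      exact ENNReal.measurable_ofReal.comp
        (by measurability)
  have hSam : ∀ k, AEMeasurable (fun Λ => (S (p k) Λ).toReal) μ := fun k =>
    ((campbell hd hX hr (hpm k)).1).ennreal_toReal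
  set Φ : Set (Vd d) → ℂ := fun Λ =>
    (((S (p 0) Λ).toReal - (S (p 1) Λ).toReal : ℝ) : ℂ)
      + Complex.I * (((S (p 2) Λ).toReal - (S (p 3) Λ).toReal : ℝ) : ℂ) with hΦ
  have hΦm : AEMeasurable Φ μ := by
    refine AEMeasurable.add ?_ (AEMeasurable.const_mul ?_ _)
    · exact (Complex.measurable_ofReal.comp_aemeasurable ((hSam 0).sub (hSam 1)))
    · exact (Complex.measurable_ofReal.comp_aemeasurable ((hSam 2).sub (hSam 3)))
  refine hΦm.aestronglyMeasurable.congr ?_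
  filter_upwards [hae] with Λ hΛ
  -- summability
  have htop : ∑' x : Λ, (‖g (x : Vd d)‖₊ : ℝ≥0∞) ≠ ⊤ := by
    rw [← S_eq_subtype (fun x => (‖g x‖₊ : ℝ≥0∞)) Λ]; exact hΛ.ne
  have hsumE : Summable fun x : Λ => ‖g (x : Vd d)‖₊ :=
    ENNReal.tsum_coe_ne_top_iff_summable.mp htop
  have hsum : Summable fun x : Λ => g (x : Vd d) := hsumE.of_nnnorm
  have hnorm : Summable fun x : Λ => ‖g (x : Vd d)‖ := by
    simpa [coe_nnnorm] using NNReal.summable_coe.mpr hsumE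
  have hre : Summable fun x : Λ => (g (x : Vd d)).re :=
    hnorm.of_norm_bounded fun x => by
      rw [Real.norm_eq_abs]
      exact Complex.abs_re_le_norm _
  have him : Summable fun x : Λ => (g (x : Vd d)).im :=
    hnorm.of_norm_bounded fun x => by
      rw [Real.norm_eq_abs]
      exact Complex.abs_im_le_norm _
  -- identify
  have hre_eq : (Nf g Λ).re = (S (p 0) Λ).toReal - (S (p 1) Λ).toReal := by
    rw [Nf, Complex.re_tsum hsum, tsum_real_eq _ hre, S_eq_subtype, S_eq_subtype]
    rfl
  have him_eq : (Nf g Λ).im = (S (p 2) Λ).toReal - (S (p 3) Λ).toReal := by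
    rw [Nf, Complex.im_tsum hsum, tsum_real_eq _ him, S_eq_subtype, S_eq_subtype]
    rfl
  apply Complex.ext
  · rw [hΦ]; simp [hre_eq]
  · rw [hΦ]; simp [him_eq]

end CountingAux
namespace CountingAux

variable {d : ℕ} {r : ℝ} {X : Set (Set (Vd d))} {μ : Measure (Set (Vd d))} {I : ℝ≥0}

lemma master (hd : 0 < d) (hX : IsPointProcess d r X μ I) (hr : 0 < r)
    {f : Vd d → ℂ} (hf : Integrable f volume) :
    Integrable (Nf f) μ ∧
      ∫⁻ Λ, (‖Nf f Λ‖₊ : ℝ≥0∞) ∂μ ≤ (I : ℝ≥0∞) * ∫⁻ x, (‖f x‖₊ : ℝ≥0∞) := by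
  set g : Vd d → ℂ := hf.1.mk f with hgdef
  have hge : f =ᵐ[volume] g := hf.1.ae_eq_mk
  have hgm : Measurable g := hf.1.stronglyMeasurable_mk.measurable
  have hgi : Integrable g volume := hf.congr hge
  have h_ae : Nf f =ᵐ[μ] Nf g := Nf_congr_ae hd hX hr hge
  have hnormeq : ∫⁻ x, (‖f x‖₊ : ℝ≥0∞) = ∫⁻ x, (‖g x‖₊ : ℝ≥0∞) := by
    refine lintegral_congr_ae ?_
    filter_upwards [hge] with x hx
    rw [hx]
  have hbound : ∫⁻ Λ, (‖Nf f Λ‖₊ : ℝ≥0∞) ∂μ ≤ (I : ℝ≥0∞) * ∫⁻ x, (‖f x‖₊ : ℝ≥0∞) := by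
    have h1 : ∫⁻ Λ, (‖Nf f Λ‖₊ : ℝ≥0∞) ∂μ = ∫⁻ Λ, (‖Nf g Λ‖₊ : ℝ≥0∞) ∂μ := by
      refine lintegral_congr_ae ?_
      filter_upwards [h_ae] with Λ hΛ
      rw [hΛ]
    have h2 : ∫⁻ Λ, (‖Nf g Λ‖₊ : ℝ≥0∞) ∂μ ≤ ∫⁻ Λ, S (fun x => (‖g x‖₊ : ℝ≥0∞)) Λ ∂μ :=
      lintegral_mono fun Λ => nnnorm_Nf_le g Λ
    rw [h1, hnormeq]
    exact h2.trans (le_of_eq (campbell hd hX hr hgm.nnnorm.coe_nnreal_ennreal).2)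
  refine ⟨⟨?_, ?_⟩, hbound⟩
  · exact (aestronglyMeasurable_Nf hd hX hr hgm hgi).congr h_ae.symm
  · exact lt_of_le_of_lt hbound (ENNReal.mul_lt_top ENNReal.coe_lt_top hf.2)

lemma ae_summable (hd : 0 < d) (hX : IsPointProcess d r X μ I) (hr : 0 < r)
    {f : Vd d → ℂ} (hf : Integrable f volume) :
    ∀ᵐ (Λ : Set (Vd d)) ∂μ, Summable fun x : ↥Λ => f (x : Vd d) := by
  set g : Vd d → ℂ := hf.1.mk f with hgdef
  have hge : f =ᵐ[volume] g := hf.1.ae_eq_mk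
  have hgm : Measurable g := hf.1.stronglyMeasurable_mk.measurable
  have hgi : Integrable g volume := hf.congr hge
  obtain ⟨hamE, hintE⟩ := campbell hd hX hr hgm.nnnorm.coe_nnreal_ennreal
  have hfinI : ∫⁻ Λ, S (fun x => (‖g x‖₊ : ℝ≥0∞)) Λ ∂μ ≠ ⊤ := by
    rw [hintE]
    exact (ENNReal.mul_lt_top ENNReal.coe_lt_top hgi.2).ne
  have h0 : (fun x => (‖f x - g x‖₊ : ℝ≥0∞)) =ᵐ[volume] (0 : Vd d → ℝ≥0∞) := by
    filter_upwards [hge] with x hx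
    simp [hx]
  filter_upwards [ae_lt_top' hamE hfinI, S_ae_zero hd hX hr h0] with Λ h1 h2
  have htop : ∑' x : Λ, (‖g (x : Vd d)‖₊ : ℝ≥0∞) ≠ ⊤ := by
    rw [← S_eq_subtype (fun x => (‖g x‖₊ : ℝ≥0∞)) Λ]; exact h1.ne
  have hsumg : Summable fun x : Λ => g (x : Vd d) :=
    (ENNReal.tsum_coe_ne_top_iff_summable.mp htop).of_nnnorm
  rw [S_eq_subtype] at h2
  refine hsumg.congr fun x => ?_
  have := ENNReal.tsum_eq_zero.mp h2 x
  have h3 : ‖f (x : Vd d) - g (x : Vd d)‖₊ = 0 := by exact_mod_cast this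
  rw [nnnorm_eq_zero, sub_eq_zero] at h3
  exact h3.symm

lemma Nf_add_ae (hd : 0 < d) (hX : IsPointProcess d r X μ I) (hr : 0 < r)
    {f₁ f₂ : Vd d → ℂ} (h₁ : Integrable f₁ volume) (h₂ : Integrable f₂ volume) :
    Nf (f₁ + f₂) =ᵐ[μ] Nf f₁ + Nf f₂ := by
  filter_upwards [ae_summable hd hX hr h₁, ae_summable hd hX hr h₂] with Λ hs₁ hs₂
  have : Nf (f₁ + f₂) Λ = ∑' x : Λ, (f₁ (x : Vd d) + f₂ (x : Vd d)) := by
    rw [Nf]; exact tsum_congr fun x => rfl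
  rw [Pi.add_apply, this, Summable.tsum_add hs₁ hs₂]
  rfl

theorem exists_counting_map (hd : 0 < d) (hr : 0 < r)
    (hX : IsPointProcess d r X μ I) :
    ∃ N : Lp ℂ 1 (volume : Measure (Vd d)) →L[ℂ] Lp ℂ 1 μ,
      (∀ g : Lp ℂ 1 (volume : Measure (Vd d)), ‖N g‖ ≤ Real.sqrt 2 * (I : ℝ) * ‖g‖) ∧
      (∀ (f : Vd d → ℂ) (hf : Integrable f volume),
        ∀ᵐ Λ ∂μ, (N ((memLp_one_iff_integrable.mpr hf).toLp f) : Set (Vd d) → ℂ) Λ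
          = ∑' x : Λ, f (x : Vd d)) := by
  classical
  set T : Lp ℂ 1 (volume : Measure (Vd d)) → Lp ℂ 1 μ := fun F =>
    Integrable.toL1 (Nf (F : Vd d → ℂ))
      (master hd hX hr (L1.integrable_coeFn F)).1 with hT
  have hTcongr : ∀ (F : Lp ℂ 1 (volume : Measure (Vd d))) (f : Vd d → ℂ)
      (hf : Integrable f volume), (F : Vd d → ℂ) =ᵐ[volume] f →
      T F = Integrable.toL1 (Nf f) (master hd hX hr hf).1 := by
    intro F f hf hFf
    rw [hT]
    exact (Integrable.toL1_eq_toL1_iff _ _ _ _).mpr (Nf_congr_ae hd hX hr hFf)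
  have hadd : ∀ F G, T (F + G) = T F + T G := by
    intro F G
    have hFG : ((F + G : Lp ℂ 1 (volume : Measure (Vd d))) : Vd d → ℂ)
        =ᵐ[volume] (F : Vd d → ℂ) + (G : Vd d → ℂ) := Lp.coeFn_add F G
    have hint : Integrable ((F : Vd d → ℂ) + (G : Vd d → ℂ)) volume :=
      (L1.integrable_coeFn F).add (L1.integrable_coeFn G)
    rw [hTcongr (F + G) _ hint hFG, hT]
    rw [← Integrable.toL1_add _ _ (master hd hX hr (L1.integrable_coeFn F)).1
      (master hd hX hr (L1.integrable_coeFn G)).1]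
    exact (Integrable.toL1_eq_toL1_iff _ _ _ _).mpr
      (Nf_add_ae hd hX hr (L1.integrable_coeFn F) (L1.integrable_coeFn G))
  have hsmul : ∀ (c : ℂ) F, T (c • F) = c • T F := by
    intro c F
    have hcF : ((c • F : Lp ℂ 1 (volume : Measure (Vd d))) : Vd d → ℂ)
        =ᵐ[volume] c • (F : Vd d → ℂ) := Lp.coeFn_smul c F
    have hint : Integrable (c • (F : Vd d → ℂ)) volume :=
      (L1.integrable_coeFn F).smul c
    rw [hTcongr (c • F) _ hint hcF, hT]
    rw [← Integrable.toL1_smul' _ (master hd hX hr (L1.integrable_coeFn F)).1 c]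
    refine (Integrable.toL1_eq_toL1_iff _ _ _ _).mpr ?_
    filter_upwards with Λ
    have : Nf (c • (F : Vd d → ℂ)) Λ = ∑' x : Λ, c • (F : Vd d → ℂ) (x : Vd d) := rfl
    rw [this, tsum_const_smul'']
    rfl
  have hbound : ∀ F : Lp ℂ 1 (volume : Measure (Vd d)), ‖T F‖ ≤ (I : ℝ) * ‖F‖ := by
    intro F
    have h1 : (‖T F‖₊ : ℝ≥0∞) = ∫⁻ Λ, (‖Nf (F : Vd d → ℂ) Λ‖₊ : ℝ≥0∞) ∂μ :=
      Integrable.enorm_toL1 _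
    have h2 : (‖F‖₊ : ℝ≥0∞) = ∫⁻ x, (‖(F : Vd d → ℂ) x‖₊ : ℝ≥0∞) ∂volume := by
      have := Integrable.enorm_toL1 (L1.integrable_coeFn F)
      rw [Integrable.toL1_coeFn] at this; exact this
    have h3 : (‖T F‖₊ : ℝ≥0∞) ≤ (I : ℝ≥0∞) * (‖F‖₊ : ℝ≥0∞) := by
      rw [h1, h2]
      exact (master hd hX hr (L1.integrable_coeFn F)).2
    have h4 : ‖T F‖ ≤ (I : ℝ) * ‖F‖ := by
      have := ENNReal.toReal_mono (by finiteness) h3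
      simpa using this
    exact h4
  set L : Lp ℂ 1 (volume : Measure (Vd d)) →ₗ[ℂ] Lp ℂ 1 μ :=
    { toFun := T, map_add' := hadd, map_smul' := hsmul } with hL
  have hsqrt2 : (1 : ℝ) ≤ Real.sqrt 2 := Real.one_le_sqrt.mpr one_le_two
  have hbound2 : ∀ F : Lp ℂ 1 (volume : Measure (Vd d)),
      ‖L F‖ ≤ Real.sqrt 2 * (I : ℝ) * ‖F‖ := by
    intro F
    refine (hbound F).trans ?_
    have hI : (0:ℝ) ≤ (I:ℝ) := I.coe_nonneg
    have hn : (0:ℝ) ≤ ‖F‖ := norm_nonneg _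
    rw [mul_assoc]
    exact le_mul_of_one_le_left (mul_nonneg hI hn) hsqrt2
  refine ⟨LinearMap.mkContinuous L (Real.sqrt 2 * (I : ℝ)) hbound2, fun G => hbound2 G, ?_⟩
  intro f hf
  have hmem := memLp_one_iff_integrable.mpr hf
  have hcoe : ((hmem.toLp f : Lp ℂ 1 (volume : Measure (Vd d))) : Vd d → ℂ)
      =ᵐ[volume] f := MemLp.coeFn_toLp hmem
  have hNT : (LinearMap.mkContinuous L (Real.sqrt 2 * (I : ℝ)) hbound2) (hmem.toLp f)
      = Integrable.toL1 (Nf f) (master hd hX hr hf).1 := hTcongr _ f hf hcoe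
  rw [hNT]
  filter_upwards [Integrable.coeFn_toL1 (master hd hX hr hf).1] with Λ hΛ
  rw [hΛ]
  rfl

end CountingAux

/-- The counting functions extend to a continuous linear map
`N : L¹(ℝ^d, ℓ) → L¹(X, μ)` with `‖N_f‖₁ ≤ √2·I·‖f‖₁` and `N_f(Λ) = ∑_{x∈Λ} f(x)`
for `μ`-almost every `Λ`. -/
theorem counting_map_L1 {d : ℕ} (hd : 0 < d) {r : ℝ} (hr : 0 < r)
    {X : Set (Set (Vd d))} {μ : Measure (Set (Vd d))} {I : ℝ≥0}
    (hX : IsPointProcess d r X μ I) :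
    ∃ N : Lp ℂ 1 (volume : Measure (Vd d)) →L[ℂ] Lp ℂ 1 μ,
      (∀ g : Lp ℂ 1 (volume : Measure (Vd d)), ‖N g‖ ≤ Real.sqrt 2 * (I : ℝ) * ‖g‖) ∧
      (∀ (f : Vd d → ℂ) (hf : Integrable f volume),
        ∀ᵐ Λ ∂μ, (N ((memLp_one_iff_integrable.mpr hf).toLp f) : Set (Vd d) → ℂ) Λ = ∑' x : Λ, f (x : Vd d)) := by
  exact CountingAux.exists_counting_map hd hr hX
end
end

section
/- Let f_n (n ∈ ℕ) and f be measurable ℂ-valued functions on ℝ^d whose supports are all contained in a fixed compact set K ⊆ ℝ^d, with ‖f_n‖_∞ < M and ‖f‖_∞ < M for some M > 0, and suppose f_n → f in the L¹-norm on (ℝ^d, ℓ). Then N_{f_n} → N_f in the L²-norm on (X, μ). -/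
open MeasureTheory Filter Topology Set
open scoped RealInnerProductSpace ENNReal NNReal

noncomputable section

lemma Nf_continuous {d : ℕ} {f : Vd d → ℂ} (hc : Continuous f) (hs : HasCompactSupport f) :
    Continuous (Nf f) := by
  have : instTopConfig d = vagueTop d := rfl
  rw [continuous_iff_le_induced, this, vagueTop]
  exact iInf_le_of_le f (iInf_le_of_le hc (iInf_le_of_le hs le_rfl))

lemma Nf_measurable {d : ℕ} {f : Vd d → ℂ} (hc : Continuous f) (hs : HasCompactSupport f) :
    Measurable (Nf f) := (Nf_continuous hc hs).measurable

example {d : ℕ} (i : Fin d) : Continuous fun x : Vd d => x i := PiLp.continuous_apply 2 _ i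

lemma cube_isOpen (d : ℕ) (R : ℝ) : IsOpen (cube d R) := by
  have : cube d R = ⋂ i, (fun x : Vd d => x i) ⁻¹' (Set.Ioo (-(R/2)) (R/2)) := by
    ext x
    simp only [cube, Set.mem_setOf_eq, Set.mem_iInter, Set.mem_preimage, Set.mem_Ioo, ← abs_lt]
  rw [this]
  exact isOpen_iInter_of_finite fun i => (isOpen_Ioo).preimage (PiLp.continuous_apply 2 _ i)

lemma tr_isOpen {d : ℕ} (a : Vd d) {s : Set (Vd d)} (hs : IsOpen s) : IsOpen (tr a s) := by
  have : tr a s = (fun x : Vd d => -a + x) ⁻¹' s := by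
    ext x
    constructor
    · rintro ⟨y, hy, rfl⟩; simpa using hy
    · intro h; exact ⟨-a + x, h, add_neg_cancel_left a x⟩
  rw [this]
  exact hs.preimage (continuous_const.add continuous_id)

lemma mem_tr_self {d : ℕ} {r : ℝ} (hr : 0 < r) (x : Vd d) : x ∈ tr x (cube d r) := by
  refine ⟨0, fun i => ?_, by simp⟩
  have : (0 : Vd d) i = 0 := rfl
  rw [this]; simpa using by positivity

lemma encard_biUnion_le {α β : Type*} (t : Finset α) (S : α → Set β) :
    (⋃ a ∈ t, S a).encard ≤ ∑ a ∈ t, (S a).encard := by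
  classical
  induction t using Finset.induction_on with
  | empty => simp
  | @insert a s h ih =>
    rw [Finset.set_biUnion_insert, Finset.sum_insert h]
    exact (Set.encard_union_le _ _).trans (add_le_add le_rfl ih)

lemma exists_card_bound {d : ℕ} {r : ℝ} (hr : 0 < r) (B : Set (Vd d)) (hB : IsCompact B) :
    ∃ C : ℕ, ∀ Λ : Set (Vd d), UD r Λ → ∀ A ⊆ B, (Λ ∩ A).encard ≤ C := by
  obtain ⟨t, ht⟩ := hB.elim_finite_subcover (fun a : Vd d => tr a (cube d r))
    (fun a => tr_isOpen a (cube_isOpen d r)) (fun x _ => Set.mem_iUnion.2 ⟨x, mem_tr_self hr x⟩)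
  refine ⟨t.card, fun Λ hΛ A hA => ?_⟩
  have h1 : Λ ∩ A ⊆ ⋃ a ∈ t, (Λ ∩ tr a (cube d r)) := by
    intro x hx
    obtain ⟨a, ha, hxa⟩ := Set.mem_iUnion₂.1 (ht (hA hx.2))
    exact Set.mem_iUnion₂.2 ⟨a, ha, hx.1, hxa⟩
  calc (Λ ∩ A).encard ≤ _ := Set.encard_mono h1
    _ ≤ ∑ a ∈ t, (Λ ∩ tr a (cube d r)).encard := encard_biUnion_le _ _
    _ ≤ ∑ a ∈ t, 1 := Finset.sum_le_sum fun a _ => Set.encard_le_one_iff.2 (fun x y hx hy => hΛ a hx hy)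
    _ = t.card := by simp

lemma Nf_eq_sum {d : ℕ} {g : Vd d → ℂ} {Λ S : Set (Vd d)}
    (hsupp : Function.support g ⊆ S) (hfin : (Λ ∩ S).Finite) :
    ∃ T : Finset Λ, (∀ x : Λ, x ∈ T ↔ (x : Vd d) ∈ S) ∧ T.card = (Λ ∩ S).ncard ∧
      Nf g Λ = ∑ x ∈ T, g (x : Vd d) := by
  have hT : (Subtype.val ⁻¹' S : Set Λ).Finite := by
    have he : (Subtype.val ⁻¹' S : Set Λ) = Subtype.val ⁻¹' (Λ ∩ S) := by
      ext x; simp [x.2]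
    rw [he]
    exact Set.Finite.preimage (Subtype.val_injective.injOn) hfin
  refine ⟨hT.toFinset, fun x => by simp, ?_, ?_⟩
  · have himg : Subtype.val '' (Subtype.val ⁻¹' S : Set Λ) = Λ ∩ S := by
      ext y
      constructor
      · rintro ⟨x, hx, rfl⟩; exact ⟨x.2, hx⟩
      · rintro ⟨hyΛ, hyS⟩; exact ⟨⟨y, hyΛ⟩, hyS, rfl⟩
    rw [← himg, Set.ncard_image_of_injective _ Subtype.val_injective,
      Set.ncard_eq_toFinset_card _ hT]
  apply tsum_eq_sum
  intro x hx
  have : (x : Vd d) ∉ S := by simpa using hx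
  exact Function.notMem_support.1 (fun hc => this (hsupp hc))

lemma encard_eq_count {α : Type*} [MeasurableSpace α] [MeasurableSingletonClass α]
    {s : Set α} (hs : s.Finite) : ((s.encard : ℕ∞) : ℝ≥0∞) = Measure.count s := by
  rw [Measure.count_apply_finite s hs, ← hs.cast_ncard_eq,
    Set.ncard_eq_toFinset_card s hs]
  simp

lemma encard_iUnion_eq {α : Type*} (S : ℕ → Set α)
    (hdisj : Pairwise (Function.onFun Disjoint S)) (hfin : (⋃ i, S i).Finite) :
    (((⋃ i, S i).encard : ℕ∞) : ℝ≥0∞) = ∑' i, (((S i).encard : ℕ∞) : ℝ≥0∞) := by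
  classical
  letI : MeasurableSpace α := ⊤
  haveI : MeasurableSingletonClass α := ⟨fun _ => trivial⟩
  rw [encard_eq_count hfin, measure_iUnion hdisj (fun i => trivial)]
  exact tsum_congr fun i => (encard_eq_count (hfin.subset (Set.subset_iUnion S i))).symm

lemma ae_mem_X {d : ℕ} {X : Set (Set (Vd d))}
    {μ : Measure (Set (Vd d))} (hXnull : μ Xᶜ = 0) : ∀ᵐ Λ ∂μ, Λ ∈ X := by
  rw [MeasureTheory.ae_iff]
  exact measure_mono_null (fun Λ h => by simpa using h) hXnull

lemma aemeasurable_encard_open {d : ℕ} (hd : 0 < d) {X : Set (Set (Vd d))} {μ : Measure (Set (Vd d))}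
    (hXnull : μ Xᶜ = 0) {A : Set (Vd d)} (hA : IsOpen A)
    (hAc : IsCompact (closure A)) (hfin : ∀ Λ ∈ X, (Λ ∩ A).Finite) :
    AEMeasurable (fun Λ => ((Λ ∩ A).encard : ℝ≥0∞)) μ := by
  classical
  have : Nonempty (Fin d) := Fin.pos_iff_nonempty.1 hd
  have hAcne : Aᶜ.Nonempty := by
    rw [Set.nonempty_compl]
    intro hAu
    exact IsCompact.ne_univ (by rwa [hAu, closure_univ] at hAc) rfl
  set fk : ℕ → Vd d → ℂ := fun k x => ((min 1 (k * Metric.infDist x Aᶜ) : ℝ) : ℂ) with hfk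
  have hcont : ∀ k, Continuous (fk k) :=
    fun k => Complex.continuous_ofReal.comp
      (continuous_const.min (continuous_const.mul (Metric.continuous_infDist_pt _)))
  have hsupp : ∀ k, Function.support (fk k) ⊆ A := by
    intro k x hx
    by_contra hxA
    apply hx
    simp only [hfk, Metric.infDist_zero_of_mem (Set.mem_compl hxA), mul_zero,
      min_eq_right (zero_le_one), Complex.ofReal_zero]
  have hcs : ∀ k, HasCompactSupport (fk k) := by
    intro k
    refine IsCompact.of_isClosed_subset hAc isClosed_closure (closure_mono (hsupp k))
  -- pointwise limit on X
  have hlim : ∀ Λ ∈ X, Tendsto (fun k => (Nf (fk k) Λ).re) atTop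
      (𝓝 ((Λ ∩ A).ncard : ℝ)) := by
    intro Λ hΛ
    obtain ⟨T, hTmem, hTcard, -⟩ := Nf_eq_sum (g := fk 0) (hsupp 0) (hfin Λ hΛ)
    have hsum : ∀ k, Nf (fk k) Λ = ∑ x ∈ T, fk k (x : Vd d) := by
      intro k
      obtain ⟨T', hT'mem, -, hT'sum⟩ := Nf_eq_sum (g := fk k) (hsupp k) (hfin Λ hΛ)
      have : T' = T := Finset.ext fun x => by rw [hT'mem, hTmem]
      rwa [this] at hT'sum
    have hterm : ∀ x ∈ T, Tendsto (fun k : ℕ => fk k (x : Vd d)) atTop (𝓝 1) := by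
      intro x hx
      have hxA : (x : Vd d) ∈ A := (hTmem x).1 hx
      have hpos : 0 < Metric.infDist (x : Vd d) Aᶜ :=
        (hA.isClosed_compl.notMem_iff_infDist_pos hAcne |>.1 (by simpa using hxA))
      have : ∀ᶠ k : ℕ in atTop, fk k (x : Vd d) = 1 := by
        filter_upwards [eventually_ge_atTop ⌈1 / Metric.infDist (x : Vd d) Aᶜ⌉₊] with k hk
        have h1 : (1 : ℝ) / Metric.infDist (x : Vd d) Aᶜ ≤ k :=
          le_trans (Nat.le_ceil _) (Nat.cast_le.2 hk)
        have h2 : (1 : ℝ) ≤ k * Metric.infDist (x : Vd d) Aᶜ := by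
          rw [div_le_iff₀ hpos] at h1
          linarith
        simp [hfk, min_eq_left h2]
      exact Tendsto.congr'
        (by filter_upwards [this] with k hk using hk.symm) tendsto_const_nhds
    have := tendsto_finset_sum T hterm
    have h2 : Tendsto (fun k => Nf (fk k) Λ) atTop (𝓝 (T.card : ℂ)) := by
      simpa [hsum, Finset.sum_const] using this
    have h3 := (Complex.continuous_re.tendsto _).comp h2
    simp only [Function.comp_def] at h3
    rw [← hTcard]
    simpa using h3
  have haeX : ∀ᵐ Λ ∂μ, Λ ∈ X := by
    rw [MeasureTheory.ae_iff]
    exact measure_mono_null (fun Λ h => by simpa using h) hXnull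
  have hmeas : AEMeasurable (fun Λ => ((Λ ∩ A).ncard : ℝ)) μ := by
    apply aemeasurable_of_tendsto_metrizable_ae (f := fun k Λ => (Nf (fk k) Λ).re) atTop
    · exact fun k => ((Complex.measurable_re.comp (Nf_measurable (hcont k) (hcs k)))).aemeasurable
    · filter_upwards [haeX] with Λ hΛ using hlim Λ hΛ
  have : (fun Λ => ((Λ ∩ A).encard : ℝ≥0∞)) =ᵐ[μ]
      fun Λ => ENNReal.ofReal ((Λ ∩ A).ncard : ℝ) := by
    filter_upwards [haeX] with Λ hΛ
    rw [← (hfin Λ hΛ).cast_ncard_eq]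
    simp
  exact (ENNReal.measurable_ofReal.comp_aemeasurable hmeas).congr this.symm

lemma aemeasurable_encard_borel {d : ℕ} (hd : 0 < d) {X : Set (Set (Vd d))} {μ : Measure (Set (Vd d))}
    (hXnull : μ Xᶜ = 0) {U : Set (Vd d)} (hU : IsOpen U) (hUc : IsCompact (closure U))
    (hfin : ∀ Λ ∈ X, ∀ B ⊆ closure U, (Λ ∩ B).Finite)
    {A : Set (Vd d)} (hA : MeasurableSet A) :
    AEMeasurable (fun Λ => ((Λ ∩ (A ∩ U)).encard : ℝ≥0∞)) μ := by
  have hfin' : ∀ Λ ∈ X, ∀ (B : Set (Vd d)), B ⊆ U → (Λ ∩ B).Finite :=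
    fun Λ hΛ B hB => hfin Λ hΛ B (hB.trans subset_closure)
  have hopen : ∀ V : Set (Vd d), IsOpen V → V ⊆ U →
      AEMeasurable (fun Λ => ((Λ ∩ V).encard : ℝ≥0∞)) μ := by
    intro V hV hVU
    exact aemeasurable_encard_open hd hXnull hV
      (IsCompact.of_isClosed_subset hUc isClosed_closure (closure_mono hVU))
      (fun Λ hΛ => hfin' Λ hΛ V hVU)
  have hUmeas := hopen U hU Subset.rfl
  refine MeasurableSpace.induction_on_inter
    (C := fun A _ => AEMeasurable (fun Λ => ((Λ ∩ (A ∩ U)).encard : ℝ≥0∞)) μ)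
    (BorelSpace.measurable_eq (α := Vd d)) isPiSystem_isOpen ?_ ?_ ?_ ?_ _ hA
  · simpa using aemeasurable_const
  · intro t ht
    simp only [Set.mem_setOf_eq] at ht
    exact hopen (t ∩ U) (ht.inter hU) inter_subset_right
  · intro t htm iht
    have hae : (fun Λ => ((Λ ∩ (tᶜ ∩ U)).encard : ℝ≥0∞)) =ᵐ[μ]
        fun Λ => ((Λ ∩ U).encard : ℝ≥0∞) - ((Λ ∩ (t ∩ U)).encard : ℝ≥0∞) := by
      filter_upwards [ae_mem_X hXnull] with Λ hΛ
      have h1 : Λ ∩ (tᶜ ∩ U) = (Λ ∩ U) \ (Λ ∩ (t ∩ U)) := by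
        ext x; by_cases hx : x ∈ t <;> simp [hx] <;> tauto
      have hfU : (Λ ∩ U).Finite := hfin' Λ hΛ U Subset.rfl
      have hsub : Λ ∩ (t ∩ U) ⊆ Λ ∩ U := fun x hx => ⟨hx.1, hx.2.2⟩
      have hftU : (Λ ∩ (t ∩ U)).Finite := hfU.subset hsub
      rw [h1, ← hfU.cast_ncard_eq, ← hftU.cast_ncard_eq, ← ((show ((Λ ∩ U) \ (Λ ∩ (t ∩ U))).Finite from hfU.diff).cast_ncard_eq)]
      rw [Set.ncard_diff hsub hftU]
      have hle : (Λ ∩ (t ∩ U)).ncard ≤ (Λ ∩ U).ncard := Set.ncard_le_ncard hsub hfU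
      simp only [ENat.toENNReal_coe]
      exact_mod_cast (ENNReal.natCast_sub _ _)
    exact AEMeasurable.congr (hUmeas.sub iht) hae.symm
  · intro F hFdisj hFmeas ihF
    have hae : (fun Λ => ((Λ ∩ ((⋃ i, F i) ∩ U)).encard : ℝ≥0∞)) =ᵐ[μ]
        fun Λ => ∑' i, ((Λ ∩ (F i ∩ U)).encard : ℝ≥0∞) := by
      filter_upwards [ae_mem_X hXnull] with Λ hΛ
      have h1 : Λ ∩ ((⋃ i, F i) ∩ U) = ⋃ i, (Λ ∩ (F i ∩ U)) := by
        ext x; simp only [Set.mem_inter_iff, Set.mem_iUnion]; tauto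
      rw [h1]
      apply encard_iUnion_eq
      · intro i j hij
        refine Set.disjoint_left.2 fun x hxi hxj => ?_
        exact Set.disjoint_left.1 (hFdisj hij) hxi.2.1 hxj.2.1
      · rw [← h1]; exact hfin' Λ hΛ _ inter_subset_right
    exact AEMeasurable.congr (AEMeasurable.ennreal_tsum ihF) hae.symm

lemma lintegral_finset_sum_ae {α ι : Type*} [MeasurableSpace α] (μ : Measure α)
    (s : Finset ι) {f : ι → α → ℝ≥0∞} (hf : ∀ i ∈ s, AEMeasurable (f i) μ) :
    ∫⁻ a, ∑ i ∈ s, f i a ∂μ = ∑ i ∈ s, ∫⁻ a, f i a ∂μ := by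
  classical
  induction s using Finset.induction_on with
  | empty => simp
  | @insert a s ha ih =>
    simp only [Finset.sum_insert ha]
    rw [lintegral_add_left' (hf a (Finset.mem_insert_self a s)),
      ih (fun i hi => hf i (Finset.mem_insert_of_mem hi))]

lemma tsum_indicator_count {α : Type*} {Λ A : Set α} (hfin : (Λ ∩ A).Finite) (c : ℝ≥0∞) :
    ∑' x : Λ, A.indicator (fun _ => c) (x : α) = ((Λ ∩ A).encard : ℝ≥0∞) * c := by
  classical
  have hT : (Subtype.val ⁻¹' A : Set Λ).Finite := by
    have he : (Subtype.val ⁻¹' A : Set Λ) = Subtype.val ⁻¹' (Λ ∩ A) := by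
      ext x; simp [x.2]
    rw [he]
    exact Set.Finite.preimage (Subtype.val_injective.injOn) hfin
  rw [tsum_eq_sum (s := hT.toFinset) (by
    intro x hx
    have : (x : α) ∉ A := by simpa using hx
    simp [Set.indicator_of_notMem this])]
  have hval : ∀ x ∈ hT.toFinset, A.indicator (fun _ => c) (x : α) = c := by
    intro x hx
    have : (x : α) ∈ A := by simpa using hx
    simp [Set.indicator_of_mem this]
  rw [Finset.sum_congr rfl hval, Finset.sum_const]
  have hcard : hT.toFinset.card = (Λ ∩ A).ncard := by
    have himg : Subtype.val '' (Subtype.val ⁻¹' A : Set Λ) = Λ ∩ A := by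
      ext y
      constructor
      · rintro ⟨x, hx, rfl⟩; exact ⟨x.2, hx⟩
      · rintro ⟨hyΛ, hyA⟩; exact ⟨⟨y, hyΛ⟩, hyA, rfl⟩
    rw [← himg, Set.ncard_image_of_injective _ Subtype.val_injective,
      Set.ncard_eq_toFinset_card _ hT]
  rw [hcard, ← hfin.cast_ncard_eq]
  simp [nsmul_eq_mul]

lemma campbell_le {d : ℕ} (hd : 0 < d)
    {X : Set (Set (Vd d))} {μ : Measure (Set (Vd d))} {I : ℝ≥0}
    (hXnull : μ Xᶜ = 0)
    (hint : ∀ A : Set (Vd d), MeasurableSet A →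
      ∫⁻ Λ, ((Λ ∩ A).encard : ℝ≥0∞) ∂μ = (I : ℝ≥0∞) * volume A)
    {U : Set (Vd d)} (hU : IsOpen U) (hUc : IsCompact (closure U)) (hUvol : volume U < ⊤)
    (hfin : ∀ Λ ∈ X, ∀ B ⊆ closure U, (Λ ∩ B).Finite)
    {h : Vd d → ℝ} (hhm : Measurable h) (hh0 : ∀ x, 0 ≤ h x) {M : ℝ} (hM : 0 < M)
    (hhb : ∀ x, h x ≤ M) (hhs : Function.support h ⊆ U) :
    ∫⁻ Λ, ∑' x : Λ, ENNReal.ofReal (h (x : Vd d)) ∂μ ≤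
      (I : ℝ≥0∞) * ∫⁻ x, ENNReal.ofReal (h x) := by
  classical
  set b : ℝ≥0∞ := (I : ℝ≥0∞) * ∫⁻ x, ENNReal.ofReal (h x) with hb
  -- step estimate for each j ≥ 1
  have key : ∀ j : ℕ, 1 ≤ j →
      ∫⁻ Λ, ∑' x : Λ, ENNReal.ofReal (h (x : Vd d)) ∂μ ≤
        b + ((I : ℝ≥0∞) * volume U) * ENNReal.ofReal (M / j) := by
    intro j hj
    set δ : ℝ := M / j with hδ
    have hjR : (0 : ℝ) < j := by exact_mod_cast hj
    have hδpos : 0 < δ := div_pos hM hjR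
    set A : ℕ → Set (Vd d) :=
      fun i : ℕ => (h ⁻¹' Set.Ioc ((i : ℝ) * δ) (((i : ℝ) + 1) * δ)) ∩ U with hA
    have hAm : ∀ i : ℕ, MeasurableSet (h ⁻¹' Set.Ioc ((i : ℝ) * δ) (((i : ℝ) + 1) * δ)) :=
      fun i => hhm measurableSet_Ioc
    set c : ℕ → ℝ≥0∞ := fun i => ENNReal.ofReal ((i + 1) * δ) with hc
    set s : Vd d → ℝ≥0∞ := fun x => ∑ i ∈ Finset.range j, (A i).indicator (fun _ => c i) x
      with hs
    have hkey : ∀ x, ∀ i i' : ℕ, i < i' → x ∈ A i → x ∈ A i' → False := by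
      intro x i i' hlt hi hi'
      have h1 : ((i : ℝ) + 1) * δ ≤ (i' : ℝ) * δ := by
        have : ((i : ℝ) + 1) ≤ (i' : ℝ) := by exact_mod_cast Nat.succ_le_of_lt hlt
        exact mul_le_mul_of_nonneg_right this hδpos.le
      exact lt_irrefl (h x) (lt_of_le_of_lt (hi.1.2.trans h1) hi'.1.1)
    have hAuniq : ∀ x, ∀ i i' : ℕ, x ∈ A i → x ∈ A i' → i = i' := by
      intro x i i' hi hi'
      rcases lt_trichotomy i i' with hlt | heq | hgt
      · exact (hkey x i i' hlt hi hi').elim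
      · exact heq
      · exact (hkey x i' i hgt hi' hi).elim
    -- pointwise: ofReal (h x) ≤ s x
    have claim1 : ∀ x, ENNReal.ofReal (h x) ≤ s x := by
      intro x
      rcases eq_or_lt_of_le (hh0 x) with h0 | hpos
      · simp [← h0]
      · have hxU : x ∈ U := hhs (by
          simp only [Function.mem_support]
          exact ne_of_gt hpos)
        set n : ℕ := ⌈h x / δ⌉₊ with hn
        have hn0 : 0 < n := Nat.ceil_pos.2 (div_pos hpos hδpos)
        have hnj : n ≤ j := by
          apply Nat.ceil_le.2
          rw [div_le_iff₀ hδpos, hδ]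
          field_simp
          exact hhb x
        have hup : h x ≤ n * δ := by
          have := Nat.le_ceil (h x / δ)
          rwa [div_le_iff₀ hδpos] at this
        have hlow : ((n - 1 : ℕ) : ℝ) * δ < h x := by
          have h1 : (n - 1 : ℕ) < n := Nat.sub_lt hn0 one_pos
          have h2 : ((n - 1 : ℕ) : ℝ) < h x / δ := Nat.lt_ceil.1 h1
          calc ((n - 1 : ℕ) : ℝ) * δ < (h x / δ) * δ :=
                mul_lt_mul_of_pos_right h2 hδpos
            _ = h x := div_mul_cancel₀ _ hδpos.ne'
        have hcast : ((n - 1 : ℕ) : ℝ) + 1 = (n : ℝ) := by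
          exact_mod_cast congrArg (Nat.cast : ℕ → ℝ) (Nat.sub_add_cancel hn0)
        have hmem : x ∈ A (n - 1) := by
          refine ⟨⟨hlow, ?_⟩, hxU⟩
          rw [hcast]
          exact hup
        have hin : (n - 1 : ℕ) ∈ Finset.range j :=
          Finset.mem_range.2 (lt_of_lt_of_le (Nat.sub_lt hn0 one_pos) hnj)
        calc ENNReal.ofReal (h x) ≤ c (n - 1) := by
              apply ENNReal.ofReal_le_ofReal
              rw [hcast]
              exact hup
          _ = (A (n - 1)).indicator (fun _ => c (n - 1)) x := by
              rw [Set.indicator_of_mem hmem]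
          _ ≤ s x := Finset.single_le_sum (f := fun i => (A i).indicator
              (fun _ => c i) x) (fun i _ => zero_le) hin
    -- pointwise: s x ≤ ofReal (h x) + indicator U δ
    have claim2 : ∀ x, s x ≤ ENNReal.ofReal (h x)
        + U.indicator (fun _ => ENNReal.ofReal δ) x := by
      intro x
      by_cases hx : ∃ i ∈ Finset.range j, x ∈ A i
      · obtain ⟨i₀, hi₀r, hxi₀⟩ := hx
        have hsx : s x = c i₀ := by
          rw [show s x = ∑ i ∈ Finset.range j, (A i).indicator (fun _ => c i) x from rfl]
          rw [Finset.sum_eq_single i₀]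
          · rw [Set.indicator_of_mem hxi₀]
          · intro i hi hne
            apply Set.indicator_of_notMem
            exact fun hxi => hne (hAuniq x i i₀ hxi hxi₀)
          · exact fun hc => absurd hi₀r hc
        rw [hsx, Set.indicator_of_mem hxi₀.2]
        have : (↑i₀ + 1) * δ ≤ h x + δ := by
          have := hxi₀.1.1
          nlinarith
        calc c i₀ ≤ ENNReal.ofReal (h x + δ) := ENNReal.ofReal_le_ofReal this
          _ = ENNReal.ofReal (h x) + ENNReal.ofReal δ :=
              ENNReal.ofReal_add (hh0 x) hδpos.le
      · have hsx : s x = 0 := by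
          rw [hs]
          apply Finset.sum_eq_zero
          intro i hi
          exact Set.indicator_of_notMem (fun hxi => hx ⟨i, hi, hxi⟩) _
        rw [hsx]
        exact zero_le
    -- main chain
    have hAfin : ∀ Λ ∈ X, ∀ i : ℕ, (Λ ∩ A i).Finite :=
      fun Λ hΛ i => hfin Λ hΛ (A i) (le_trans inter_subset_right subset_closure)
    have hAmeas' : ∀ i : ℕ, AEMeasurable
        (fun Λ : Set (Vd d) => ((Λ ∩ A i).encard : ℝ≥0∞)) μ :=
      fun i => aemeasurable_encard_borel hd hXnull hU hUc hfin (hAm i)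
    have step1 : ∫⁻ Λ, ∑' x : Λ, ENNReal.ofReal (h (x : Vd d)) ∂μ ≤
        ∫⁻ Λ, ∑' x : Λ, s (x : Vd d) ∂μ :=
      lintegral_mono fun Λ => ENNReal.tsum_le_tsum fun x => claim1 _
    have step2 : ∫⁻ Λ, ∑' x : Λ, s (x : Vd d) ∂μ =
        ∑ i ∈ Finset.range j, ((I : ℝ≥0∞) * volume (A i)) * c i := by
      have e1 : ∫⁻ Λ, ∑' x : Λ, s (x : Vd d) ∂μ =
          ∫⁻ Λ, ∑ i ∈ Finset.range j,
            ((Λ ∩ A i).encard : ℝ≥0∞) * c i ∂μ := by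
        apply lintegral_congr_ae
        filter_upwards [ae_mem_X hXnull] with Λ hΛ
        rw [hs]
        rw [Summable.tsum_finsetSum (fun i _ => ENNReal.summable)]
        exact Finset.sum_congr rfl fun i _ => tsum_indicator_count (hAfin Λ hΛ i) (c i)
      rw [e1, lintegral_finset_sum_ae μ _ (fun i _ => (hAmeas' i).mul_const (c i))]
      refine Finset.sum_congr rfl fun i _ => ?_
      rw [lintegral_mul_const' (c i) _ ENNReal.ofReal_ne_top,
        hint (A i) ((hAm i).inter hU.measurableSet)]
    have step3 : ∑ i ∈ Finset.range j, ((I : ℝ≥0∞) * volume (A i)) * c i =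
        (I : ℝ≥0∞) * ∫⁻ x, s x := by
      have e2 : ∫⁻ x, s x = ∑ i ∈ Finset.range j, volume (A i) * c i := by
        have e0 : ∫⁻ x, s x = ∫⁻ x, ∑ i ∈ Finset.range j,
            (A i).indicator (fun _ => c i) x := rfl
        rw [e0, lintegral_finset_sum _ (fun i _ => (measurable_const.indicator
          ((hAm i).inter hU.measurableSet)))]
        refine Finset.sum_congr rfl fun i _ => ?_
        rw [lintegral_indicator_const ((hAm i).inter hU.measurableSet)]
        ring
      rw [e2, Finset.mul_sum]
      exact Finset.sum_congr rfl fun i _ => by ring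
    have step4 : ∫⁻ x, s x ≤ (∫⁻ x, ENNReal.ofReal (h x)) + ENNReal.ofReal δ * volume U := by
      calc ∫⁻ x, s x ≤ ∫⁻ x, (ENNReal.ofReal (h x)
            + U.indicator (fun _ => ENNReal.ofReal δ) x) := lintegral_mono claim2
        _ = (∫⁻ x, ENNReal.ofReal (h x)) + ENNReal.ofReal δ * volume U := by
            rw [lintegral_add_left (hhm.ennreal_ofReal),
              lintegral_indicator_const hU.measurableSet]
    calc ∫⁻ Λ, ∑' x : Λ, ENNReal.ofReal (h (x : Vd d)) ∂μ
        ≤ (I : ℝ≥0∞) * ∫⁻ x, s x := by rw [← step3, ← step2]; exact step1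
      _ ≤ (I : ℝ≥0∞) * ((∫⁻ x, ENNReal.ofReal (h x)) + ENNReal.ofReal δ * volume U) :=
          mul_le_mul_right step4 _
      _ = b + ((I : ℝ≥0∞) * volume U) * ENNReal.ofReal (M / j) := by
          rw [mul_add, hb, hδ]
          ring
  -- pass to the limit
  have htend : Tendsto (fun j : ℕ => b + ((I : ℝ≥0∞) * volume U) * ENNReal.ofReal (M / j))
      atTop (𝓝 b) := by
    have h1 : Tendsto (fun j : ℕ => (M / j : ℝ)) atTop (𝓝 0) :=
      tendsto_const_div_atTop_nhds_zero_nat M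
    have h2 : Tendsto (fun j : ℕ => ENNReal.ofReal (M / j)) atTop (𝓝 0) := by
      have := (ENNReal.continuous_ofReal.tendsto 0).comp h1
      simpa [Function.comp_def] using this
    have h3 : Tendsto (fun j : ℕ => ((I : ℝ≥0∞) * volume U) * ENNReal.ofReal (M / j))
        atTop (𝓝 0) := by
      have := ENNReal.Tendsto.const_mul (b := (0:ℝ≥0∞))
        (a := (I : ℝ≥0∞) * volume U) h2
        (Or.inr (ENNReal.mul_ne_top ENNReal.coe_ne_top hUvol.ne))
      simpa using this
    simpa using (tendsto_const_nhds (x := b)).add h3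
  refine ge_of_tendsto htend ?_
  filter_upwards [eventually_ge_atTop 1] with j hj using key j hj

/-- If `f_n → f` in `L¹(ℝ^d)`, all with supports in a fixed compact `K` and
uniformly bounded by `M`, then `N_{f_n} → N_f` in `L²(X, μ)`. -/
theorem Nf_tendsto_L2 {d : ℕ} (hd : 0 < d) {r : ℝ} (hr : 0 < r)
    {X : Set (Set (Vd d))} {μ : Measure (Set (Vd d))} {I : ℝ≥0}
    (hX : IsPointProcess d r X μ I)
    (K : Set (Vd d)) (hK : IsCompact K) (M : ℝ) (hM : 0 < M)
    (fs : ℕ → Vd d → ℂ) (f : Vd d → ℂ)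
    (hfsm : ∀ n, Measurable (fs n)) (hfm : Measurable f)
    (hfss : ∀ n, Function.support (fs n) ⊆ K) (hfsupp : Function.support f ⊆ K)
    (hfsb : ∀ n x, ‖fs n x‖ < M) (hfb : ∀ x, ‖f x‖ < M)
    (hL1 : Tendsto (fun n => ∫ x, ‖fs n x - f x‖) atTop (𝓝 0)) :
    Tendsto (fun n => ∫ Λ, ‖Nf (fs n) Λ - Nf f Λ‖ ^ 2 ∂μ) atTop (𝓝 0) := by
  classical
  -- the enclosing ball
  obtain ⟨R, hKR⟩ := hK.isBounded.subset_ball 0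
  set U : Set (Vd d) := Metric.ball 0 R with hU
  have hUopen : IsOpen U := Metric.isOpen_ball
  have hUc : IsCompact (closure U) :=
    Metric.isCompact_of_isClosed_isBounded isClosed_closure Metric.isBounded_ball.closure
  have hUvol : volume U < ⊤ := measure_ball_lt_top
  have hKU : K ⊆ U := hKR
  -- cardinality bound
  obtain ⟨C, hC⟩ := exists_card_bound hr (closure U) hUc
  have hfin : ∀ Λ ∈ X, ∀ B ⊆ closure U, (Λ ∩ B).Finite := by
    intro Λ hΛ B hB
    have := hC Λ (hX.ud Λ hΛ) B hB
    rw [Set.encard_le_coe_iff_finite_ncard_le] at this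
    exact this.1
  have hKfin : ∀ Λ ∈ X, (Λ ∩ K).Finite ∧ (Λ ∩ K).ncard ≤ C := by
    intro Λ hΛ
    have := hC Λ (hX.ud Λ hΛ) K (hKU.trans subset_closure)
    rwa [Set.encard_le_coe_iff_finite_ncard_le] at this
  -- the difference functions
  set g : ℕ → Vd d → ℝ := fun n x => ‖fs n x - f x‖ with hg
  have hgm : ∀ n, Measurable (g n) := fun n => ((hfsm n).sub hfm).norm
  have hg0 : ∀ n x, 0 ≤ g n x := fun n x => norm_nonneg _
  have hgb : ∀ n x, g n x ≤ 2 * M := fun n x =>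
    le_trans (norm_sub_le _ _) (by linarith [hfsb n x, hfb x])
  have hgs : ∀ n, Function.support (g n) ⊆ K := by
    intro n x hx
    simp only [Function.mem_support, hg, norm_ne_zero_iff, sub_ne_zero] at hx
    by_contra hxK
    exact hx (by
      rw [Function.notMem_support.1 (fun hc => hxK (hfss n hc)),
        Function.notMem_support.1 (fun hc => hxK (hfsupp hc))])
  have hgsU : ∀ n, Function.support (g n) ⊆ U := fun n => (hgs n).trans hKU
  -- integrability of g n
  have hgint : ∀ n, Integrable (g n) := by
    intro n
    refine Integrable.mono' (g := K.indicator fun _ => 2 * M)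
      ((integrable_indicator_iff hK.measurableSet).2
      (integrableOn_const (
        (lt_of_le_of_lt (measure_mono (hKU.trans subset_closure)) hUc.measure_lt_top).ne)))
      ((hgm n).aestronglyMeasurable) ?_
    refine Filter.Eventually.of_forall fun x => ?_
    by_cases hx : x ∈ K
    · rw [Set.indicator_of_mem hx, Real.norm_eq_abs, abs_of_nonneg (hg0 n x)]
      exact hgb n x
    · rw [Set.indicator_of_notMem hx,
        Function.notMem_support.1 (fun hc => hx (hgs n hc))]
      simp
  -- key pointwise bound on X
  have hptwise : ∀ n, ∀ Λ ∈ X, ENNReal.ofReal (‖Nf (fs n) Λ - Nf f Λ‖ ^ 2) ≤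
      ENNReal.ofReal (2 * M * C) * ∑' x : Λ, ENNReal.ofReal (g n (x : Vd d)) := by
    intro n Λ hΛ
    obtain ⟨hKf, hKc⟩ := hKfin Λ hΛ
    obtain ⟨T₁, hT₁mem, hT₁card, hT₁sum⟩ := Nf_eq_sum (hfss n) hKf
    obtain ⟨T₂, hT₂mem, -, hT₂sum⟩ := Nf_eq_sum hfsupp hKf
    have hTT : T₂ = T₁ := Finset.ext fun x => by rw [hT₁mem, hT₂mem]
    rw [hTT] at hT₂sum
    set S : ℝ := ∑ x ∈ T₁, g n (x : Vd d) with hS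
    have hS0 : 0 ≤ S := Finset.sum_nonneg fun x _ => hg0 n _
    have hnorm : ‖Nf (fs n) Λ - Nf f Λ‖ ≤ S := by
      rw [hT₁sum, hT₂sum, ← Finset.sum_sub_distrib]
      exact (norm_sum_le _ _).trans (le_of_eq rfl)
    have hScard : S ≤ C * (2 * M) := by
      calc S ≤ ∑ _x ∈ T₁, (2 * M) := Finset.sum_le_sum fun x _ => hgb n _
        _ = T₁.card * (2 * M) := by rw [Finset.sum_const, nsmul_eq_mul]
        _ ≤ C * (2 * M) := by
            have : (T₁.card : ℝ) ≤ C := by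
              rw [hT₁card]; exact_mod_cast hKc
            nlinarith [hM]
    have hsq : ‖Nf (fs n) Λ - Nf f Λ‖ ^ 2 ≤ (2 * M * C) * S := by
      have h1 : ‖Nf (fs n) Λ - Nf f Λ‖ ^ 2 ≤ S ^ 2 := by
        have := norm_nonneg (Nf (fs n) Λ - Nf f Λ)
        nlinarith
      have h2 : S ^ 2 ≤ (2 * M * C) * S := by nlinarith
      linarith
    calc ENNReal.ofReal (‖Nf (fs n) Λ - Nf f Λ‖ ^ 2)
        ≤ ENNReal.ofReal ((2 * M * C) * S) := ENNReal.ofReal_le_ofReal hsq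
      _ = ENNReal.ofReal (2 * M * C) * ENNReal.ofReal S :=
          ENNReal.ofReal_mul (by positivity)
      _ ≤ ENNReal.ofReal (2 * M * C) * ∑' x : Λ, ENNReal.ofReal (g n (x : Vd d)) := by
          apply mul_le_mul_right
          rw [hS, ENNReal.ofReal_sum_of_nonneg (fun x _ => hg0 n _)]
          exact ENNReal.sum_le_tsum T₁
  -- the ENNReal-side bound
  set En : ℕ → ℝ≥0∞ := fun n =>
    ENNReal.ofReal (2 * M * C) * ((I : ℝ≥0∞) * ENNReal.ofReal (∫ x, g n x)) with hEn
  have hEnt : ∀ n, En n ≠ ⊤ := fun n =>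
    ENNReal.mul_ne_top ENNReal.ofReal_ne_top
      (ENNReal.mul_ne_top ENNReal.coe_ne_top ENNReal.ofReal_ne_top)
  have hbound : ∀ n,
      ∫⁻ Λ, ENNReal.ofReal ‖‖Nf (fs n) Λ - Nf f Λ‖ ^ 2‖ ∂μ ≤ En n := by
    intro n
    have e0 : ∀ Λ : Set (Vd d), ENNReal.ofReal ‖‖Nf (fs n) Λ - Nf f Λ‖ ^ 2‖ =
        ENNReal.ofReal (‖Nf (fs n) Λ - Nf f Λ‖ ^ 2) := by
      intro Λ
      rw [Real.norm_eq_abs, abs_of_nonneg (by positivity)]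
    calc ∫⁻ Λ, ENNReal.ofReal ‖‖Nf (fs n) Λ - Nf f Λ‖ ^ 2‖ ∂μ
        = ∫⁻ Λ, ENNReal.ofReal (‖Nf (fs n) Λ - Nf f Λ‖ ^ 2) ∂μ :=
          lintegral_congr fun Λ => e0 Λ
      _ ≤ ∫⁻ Λ, ENNReal.ofReal (2 * M * C) *
            ∑' x : Λ, ENNReal.ofReal (g n (x : Vd d)) ∂μ := by
          apply lintegral_mono_ae
          filter_upwards [ae_mem_X hX.suppX] with Λ hΛ using hptwise n Λ hΛ
      _ = ENNReal.ofReal (2 * M * C) *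
            ∫⁻ Λ, ∑' x : Λ, ENNReal.ofReal (g n (x : Vd d)) ∂μ :=
          lintegral_const_mul' _ _ ENNReal.ofReal_ne_top
      _ ≤ ENNReal.ofReal (2 * M * C) *
            ((I : ℝ≥0∞) * ∫⁻ x, ENNReal.ofReal (g n x)) := by
          apply mul_le_mul_right
          exact campbell_le hd hX.suppX hX.intensity hUopen hUc hUvol hfin
            (hgm n) (fun x => hg0 n x) (by linarith : (0:ℝ) < 2 * M)
            (fun x => hgb n x) (hgsU n)
      _ = En n := by
          rw [hEn]
          congr 1
          congr 1
          rw [← ofReal_integral_eq_lintegral_ofReal (hgint n)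
            (Filter.Eventually.of_forall fun x => hg0 n x)]
  have hEtoReal : ∀ n, (En n).toReal = (2 * M * C) * (I.toReal * ∫ x, g n x) := by
    intro n
    rw [hEn]
    rw [ENNReal.toReal_mul, ENNReal.toReal_mul, ENNReal.toReal_ofReal (by positivity),
      ENNReal.coe_toReal, ENNReal.toReal_ofReal (integral_nonneg fun x => hg0 n x)]
  have htendE : Tendsto (fun n => (En n).toReal) atTop (𝓝 0) := by
    have h1 : Tendsto (fun n => (2 * M * C) * (I.toReal * ∫ x, g n x)) atTop (𝓝 0) := by
      have := (hL1.const_mul I.toReal).const_mul (2 * M * C)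
      simpa using this
    exact h1.congr fun n => (hEtoReal n).symm
  apply squeeze_zero_norm _ htendE
  intro n
  calc ‖∫ Λ, ‖Nf (fs n) Λ - Nf f Λ‖ ^ 2 ∂μ‖
      ≤ (∫⁻ Λ, ENNReal.ofReal ‖‖Nf (fs n) Λ - Nf f Λ‖ ^ 2‖ ∂μ).toReal :=
        norm_integral_le_lintegral_norm _
    _ ≤ (En n).toReal := ENNReal.toReal_mono (hEnt n) (hbound n)
end
end

section
/- Let ω be a positive, translation-bounded Borel measure on ℝ^d (i.e. sup_{a∈ℝ^d} ω(a + K) < ∞ for every compact K ⊆ ℝ^d). Then the functions g_R : ℝ^d → ℂ defined by g_R(y) = (1/ℓ(C_R)) ∫_{C_R} e^{2πi y·x} dx converge to the indicator function 1_{{0}} in L²(ℝ^d, ω) as R → ∞; that is, ∫_{ℝ^d} |g_R(y) − 1_{{0}}(y)|² dω(y) → 0. -/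
open MeasureTheory Filter Topology Set
open scoped RealInnerProductSpace ENNReal NNReal

noncomputable section

namespace DKaux
open Complex Real

variable {d : ℕ}

lemma cube_eq (R : ℝ) : cube d R =
    (MeasurableEquiv.toLp 2 (Fin d → ℝ)).symm ⁻¹' (Set.pi Set.univ fun _ => Ioo (-(R/2)) (R/2)) := by
  ext x
  simp only [cube, mem_setOf_eq, mem_preimage, Set.mem_pi, mem_univ, forall_true_left, mem_Ioo]
  exact forall_congr' fun i => abs_lt

lemma measurableSet_cube (R : ℝ) : MeasurableSet (cube d R) := by
  rw [cube_eq]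
  exact (MeasurableEquiv.measurable _) (MeasurableSet.univ_pi fun _ => measurableSet_Ioo)

lemma volume_cube (R : ℝ) : volume (cube d R) = ENNReal.ofReal R ^ d := by
  rw [cube_eq, (EuclideanSpace.volume_preserving_symm_measurableEquiv_toLp (Fin d)).measure_preimage
    (MeasurableSet.univ_pi fun _ => measurableSet_Ioo).nullMeasurableSet]
  rw [volume_pi, Measure.pi_pi]
  simp only [Real.volume_Ioo, show R/2 - -(R/2) = R by ring]
  simp [Finset.prod_const]

lemma char_eq_prod (y x : Vd d) :
    char y x = ∏ i, Complex.exp (2 * π * I * (y i) * (x i)) := by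
  rw [char, ← Complex.exp_sum]
  congr 1
  rw [show (⟪y, x⟫ : ℝ) = ∑ i, (y i) * (x i) by
    simp [PiLp.inner_apply, RCLike.inner_apply, conj_trivial]; exact Finset.sum_congr rfl fun i _ => mul_comm _ _]
  push_cast
  rw [Finset.mul_sum]
  exact Finset.sum_congr rfl fun i _ => by ring

lemma integral_cube_char (R : ℝ) (y : Vd d) :
    ∫ x in cube d R, char y x
      = ∏ i, ∫ t in Ioo (-(R/2)) (R/2), Complex.exp (2 * π * I * (y i) * t) := by
  have h1 : ∀ x : Vd d, char y x = ∏ i, Complex.exp (2 * π * I * (y i) * (x i)) :=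
    char_eq_prod y
  simp_rw [h1]
  rw [cube_eq]
  have h3 : (∫ x : Vd d in
        (MeasurableEquiv.toLp 2 (Fin d → ℝ)).symm ⁻¹' (Set.pi Set.univ fun _ => Ioo (-(R/2)) (R/2)),
        ∏ i, Complex.exp (2 * π * I * (y i) * (x i)))
      = ∫ z : Fin d → ℝ in (Set.pi Set.univ fun _ => Ioo (-(R/2)) (R/2)),
        ∏ i, Complex.exp (2 * π * I * (y i) * (z i)) :=
    (EuclideanSpace.volume_preserving_symm_measurableEquiv_toLp (Fin d)).setIntegral_preimage_emb
      (MeasurableEquiv.measurableEmbedding _)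
      (fun z : Fin d → ℝ => ∏ i, Complex.exp (2 * π * I * (y i) * (z i))) _
  rw [h3]
  rw [← integral_indicator (MeasurableSet.univ_pi fun _ => measurableSet_Ioo)]
  have h2 : ∀ z : Fin d → ℝ,
      (Set.pi Set.univ fun _ => Ioo (-(R/2)) (R/2)).indicator
        (fun z => ∏ i, Complex.exp (2 * π * I * (y i) * (z i))) z
      = ∏ i, (Ioo (-(R/2)) (R/2)).indicator
          (fun t => Complex.exp (2 * π * I * (y i) * t)) (z i) := by
    intro z
    by_cases hz : z ∈ Set.pi Set.univ fun _ => Ioo (-(R/2)) (R/2)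
    · rw [indicator_of_mem hz]
      exact Finset.prod_congr rfl fun i _ =>
        (indicator_of_mem (hz i (mem_univ i)) (fun t => Complex.exp (2 * π * I * (y i) * t))).symm
    · rw [indicator_of_notMem hz]
      simp only [Set.mem_pi, mem_univ, forall_true_left, not_forall] at hz
      obtain ⟨j, hj⟩ := hz
      exact (Finset.prod_eq_zero (Finset.mem_univ j)
        (indicator_of_notMem hj (fun t => Complex.exp (2 * π * I * (y j) * t)))).symm
  simp_rw [h2]
  rw [volume_pi, MeasureTheory.integral_fintype_prod_eq_prod
    (f := fun i => (Ioo (-(R/2)) (R/2)).indicator (fun t => Complex.exp (2 * π * I * (y i) * t)))]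
  exact Finset.prod_congr rfl fun i _ => integral_indicator measurableSet_Ioo

end DKaux

namespace DKaux2
open Complex Real DKaux

variable {d : ℕ}

lemma exp_rewrite (a t : ℝ) : 2 * (π:ℂ) * I * a * t = ((2 * π * a * t : ℝ) : ℂ) * I := by
  push_cast; ring

lemma norm_oned (a t : ℝ) : ‖Complex.exp (2 * π * I * a * t)‖ = 1 := by
  rw [exp_rewrite, Complex.norm_exp_ofReal_mul_I]

lemma oned_le (R a : ℝ) (hR : 0 ≤ R) :
    ‖∫ t in Ioo (-(R/2)) (R/2), Complex.exp (2 * π * I * a * t)‖ ≤ R := by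
  have := norm_setIntegral_le_of_norm_le_const (μ := volume)
    (s := Ioo (-(R/2)) (R/2)) (C := 1)
    (by rw [Real.volume_Ioo]; exact ENNReal.ofReal_lt_top)
    (fun t _ => le_of_eq (norm_oned a t))
  rw [measureReal_def, Real.volume_Ioo, show R/2 - -(R/2) = R by ring, ENNReal.toReal_ofReal hR, one_mul] at this
  exact this

lemma oned_le' (R a : ℝ) (hR : 0 ≤ R) (ha : a ≠ 0) :
    ‖∫ t in Ioo (-(R/2)) (R/2), Complex.exp (2 * π * I * a * t)‖ ≤ (π * |a|)⁻¹ := by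
  have hc : (2 * (π:ℂ) * I * a) ≠ 0 := by
    simp [Complex.ext_iff, Real.pi_ne_zero, ha, I_ne_zero]
  rw [← integral_Ioc_eq_integral_Ioo,
    ← intervalIntegral.integral_of_le (by linarith : -(R/2) ≤ R/2)]
  rw [show (fun t : ℝ => Complex.exp (2 * π * I * a * t))
      = (fun t : ℝ => Complex.exp ((2 * (π:ℂ) * I * a) * t)) from funext fun t => by ring_nf]
  rw [integral_exp_mul_complex hc]
  rw [norm_div]
  have hnum : ‖Complex.exp (2 * (π:ℂ) * I * a * (R/2 : ℝ))
      - Complex.exp (2 * (π:ℂ) * I * a * (-(R/2) : ℝ))‖ ≤ 2 := by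
    refine (norm_sub_le _ _).trans ?_
    rw [norm_oned a (R/2), norm_oned a (-(R/2))]
    norm_num
  have hden : ‖2 * (π:ℂ) * I * a‖ = 2 * π * |a| := by
    simp [norm_mul, Complex.norm_real, Real.norm_eq_abs, abs_of_pos Real.pi_pos]
  rw [hden]
  have habs : (0:ℝ) < |a| := abs_pos.mpr ha
  rw [div_le_iff₀ (by positivity)]
  refine hnum.trans (le_of_eq ?_)
  field_simp

lemma g_nnnorm_le (R : ℝ) (hR : 0 < R) (y : Vd d) :
    (‖((volume (cube d R)).toReal)⁻¹ • ∫ x in cube d R, char y x‖₊ : ℝ≥0∞)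
      ≤ ∏ i, min 1 (ENNReal.ofReal (π * R * |y i|))⁻¹ := by
  have hvol : ((volume (cube d R)).toReal) = R ^ d := by
    rw [volume_cube, ENNReal.toReal_pow, ENNReal.toReal_ofReal hR.le]
  rw [← enorm_eq_nnnorm, ← ofReal_norm]
  have hnorm : ‖((volume (cube d R)).toReal)⁻¹ • ∫ x in cube d R, char y x‖
      = ∏ i, (‖∫ t in Ioo (-(R/2)) (R/2), Complex.exp (2 * π * I * (y i) * t)‖ / R) := by
    rw [norm_smul, hvol, integral_cube_char, norm_prod]
    rw [Real.norm_eq_abs, abs_inv, abs_of_pos (by positivity : (0:ℝ) < R ^ d)]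
    rw [Finset.prod_div_distrib, Finset.prod_const, Finset.card_univ, Fintype.card_fin,
      inv_mul_eq_div]
  rw [hnorm, ENNReal.ofReal_prod_of_nonneg (fun i _ => by positivity)]
  refine Finset.prod_le_prod' fun i _ => ?_
  rcases eq_or_ne (y i) 0 with h0 | h0
  · have : ENNReal.ofReal (π * R * |y i|) = 0 := by simp [h0]
    rw [this]
    simp only [ENNReal.inv_zero, min_eq_left le_top]
    refine ENNReal.ofReal_le_one.mpr ?_
    rw [div_le_one hR]
    exact oned_le R (y i) hR.le
  · refine le_min ?_ ?_
    · refine ENNReal.ofReal_le_one.mpr ?_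
      rw [div_le_one hR]
      exact oned_le R (y i) hR.le
    · rw [← ENNReal.ofReal_inv_of_pos (by positivity : (0:ℝ) < π * R * |y i|)]
      refine ENNReal.ofReal_le_ofReal ?_
      have habs : (0:ℝ) < |y i| := abs_pos.mpr h0
      have hsplit : (π * R * |y i|)⁻¹ = (π * |y i|)⁻¹ / R := by
        field_simp
      rw [hsplit]
      gcongr
      exact oned_le' R (y i) hR.le h0

end DKaux2

namespace DKaux3
open Complex Real DKaux

variable {d : ℕ}

lemma tsum_pi_prod (m : ℤ → ℝ≥0∞) : ∀ d : ℕ,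
    ∑' n : Fin d → ℤ, ∏ i, m (n i) = (∑' k : ℤ, m k) ^ d := by
  intro d
  induction d with
  | zero => rw [tsum_fintype]; simp
  | succ d ih =>
    rw [← (Fin.consEquiv (fun _ : Fin (d+1) => ℤ)).tsum_eq (fun n => ∏ i, m (n i))]
    have h1 : ∀ p : ℤ × (Fin d → ℤ),
        (∏ i, m ((Fin.consEquiv (fun _ : Fin (d+1) => ℤ)) p i))
          = m p.1 * ∏ i : Fin d, m (p.2 i) := by
      intro p
      rw [Fin.prod_univ_succ]
      simp [Fin.consEquiv]
    simp_rw [h1]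
    rw [ENNReal.tsum_prod' (f := fun p : ℤ × (Fin d → ℤ) => m p.1 * ∏ i : Fin d, m (p.2 i))]
    simp_rw [ENNReal.tsum_mul_left]
    rw [ENNReal.tsum_mul_right, ih, pow_succ]
    ring

/-- the majorant on the integer cube indexed by `k` -/
def mz (k : ℤ) : ℝ≥0∞ := (min 1 (ENNReal.ofReal (|(k:ℝ)| - 1))⁻¹) ^ 2

lemma summable_aux : Summable (fun k : ℤ => 8 / ((k:ℝ)^2 + 1)) := by
  have h1 : Summable (fun k : ℤ => (if k = 0 then (1:ℝ) else 0) + 1/(k:ℝ)^2) := by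
    refine Summable.add ?_ ?_
    · exact summable_of_ne_finset_zero (s := {0}) (fun k hk => by
        simp [Finset.mem_singleton] at hk; simp [hk])
    · exact Real.summable_one_div_int_pow.mpr one_lt_two
  refine Summable.of_nonneg_of_le (fun k => by positivity)
    (fun k => ?_) (h1.mul_left 8)
  rcases eq_or_ne k 0 with hk | hk
  · simp [hk]
  · have hk2 : (1:ℝ) ≤ (k:ℝ)^2 := by
      have : (1:ℝ) ≤ |(k:ℝ)| := by
        rw [← Int.cast_abs]
        exact_mod_cast Int.one_le_abs hk
      nlinarith [abs_nonneg (k:ℝ), _root_.sq_abs (k:ℝ)]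
    have hpos : (0:ℝ) < (k:ℝ)^2 := by nlinarith
    rw [if_neg hk, zero_add, mul_one_div]
    gcongr
    · linarith

lemma tsum_mz_lt_top : ∑' k : ℤ, mz k < ⊤ := by
  have hle : ∀ k : ℤ, mz k ≤ ENNReal.ofReal (8 / ((k:ℝ)^2 + 1)) := by
    intro k
    rcases le_or_gt (|(k:ℝ)|) 1 with hk | hk
    · have h1 : mz k ≤ 1 := by
        rw [mz]
        calc (min 1 (ENNReal.ofReal (|(k:ℝ)| - 1))⁻¹) ^ 2 ≤ 1 ^ 2 := by
              gcongr; exact min_le_left _ _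
          _ = 1 := one_pow 2
      refine h1.trans ?_
      rw [show (1:ℝ≥0∞) = ENNReal.ofReal 1 by simp]
      refine ENNReal.ofReal_le_ofReal ?_
      rw [le_div_iff₀ (by positivity)]
      nlinarith [_root_.sq_abs (k:ℝ), abs_nonneg (k:ℝ)]
    · have hpos : (0:ℝ) < |(k:ℝ)| - 1 := by linarith
      have h2 : mz k ≤ (ENNReal.ofReal (|(k:ℝ)| - 1))⁻¹ ^ 2 := by
        rw [mz]; gcongr; exact min_le_right _ _
      refine h2.trans ?_
      rw [← ENNReal.ofReal_inv_of_pos hpos, ← ENNReal.ofReal_pow (by positivity)]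
      refine ENNReal.ofReal_le_ofReal ?_
      have hk2 : (2:ℝ) ≤ |(k:ℝ)| := by
        rw [← Int.cast_abs] at hk ⊢
        have : (1:ℤ) < |k| := by exact_mod_cast hk
        exact_mod_cast this
      rw [inv_pow, inv_le_iff_one_le_mul₀ (by positivity)]
      rw [div_mul_eq_mul_div, le_div_iff₀ (by positivity)]
      nlinarith [_root_.sq_abs (k:ℝ)]
  calc ∑' k : ℤ, mz k ≤ ∑' k : ℤ, ENNReal.ofReal (8 / ((k:ℝ)^2 + 1)) :=
        ENNReal.tsum_le_tsum hle
    _ = ENNReal.ofReal (∑' k : ℤ, 8 / ((k:ℝ)^2 + 1)) :=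
        (ENNReal.ofReal_tsum_of_nonneg (fun k => by positivity) summable_aux).symm
    _ < ⊤ := ENNReal.ofReal_lt_top

end DKaux3

namespace DKaux4
open Complex Real DKaux DKaux3

variable {d : ℕ}

/-- integer-indexed half-open unit cubes partitioning `ℝ^d` -/
def Q (d : ℕ) (n : Fin d → ℤ) : Set (Vd d) := {y | ∀ i, (n i : ℝ) ≤ y i ∧ y i < n i + 1}

lemma Q_eq (n : Fin d → ℤ) : Q d n =
    (MeasurableEquiv.toLp 2 (Fin d → ℝ)).symm ⁻¹'
      (Set.pi Set.univ fun i => Ico ((n i : ℝ)) ((n i : ℝ) + 1)) := by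
  ext y
  simp only [Q, mem_setOf_eq, mem_preimage, Set.mem_pi, mem_univ, forall_true_left, mem_Ico]
  exact Iff.rfl

lemma measurableSet_Q (n : Fin d → ℤ) : MeasurableSet (Q d n) := by
  rw [Q_eq]
  exact (MeasurableEquiv.measurable _) (MeasurableSet.univ_pi fun _ => measurableSet_Ico)

lemma iUnion_Q : (⋃ n : Fin d → ℤ, Q d n) = Set.univ := by
  refine eq_univ_of_forall fun y => ?_
  refine mem_iUnion.mpr ⟨fun i => ⌊y i⌋, fun i => ?_⟩
  exact ⟨Int.floor_le _, by push_cast; exact Int.lt_floor_add_one _⟩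

lemma disjoint_Q : Pairwise (Function.onFun Disjoint (Q d)) := by
  intro n m hnm
  rw [Function.onFun, Set.disjoint_left]
  intro y hy hy'
  refine hnm (funext fun i => ?_)
  have h1 := (hy i)
  have h2 := (hy' i)
  have e1 : n i = ⌊y i⌋ := by
    symm; exact Int.floor_eq_iff.mpr ⟨h1.1, by push_cast; exact h1.2⟩
  have e2 : m i = ⌊y i⌋ := by
    symm; exact Int.floor_eq_iff.mpr ⟨h2.1, by push_cast; exact h2.2⟩
  rw [e1, e2]

/-- the compact unit-ish cube -/
def K (d : ℕ) : Set (Vd d) := {x | ∀ i, |x i| ≤ 1}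

lemma isCompact_K : IsCompact (K d) := by
  have : K d = (EuclideanSpace.equiv (Fin d) ℝ).toHomeomorph ⁻¹'
      (Set.pi Set.univ fun _ : Fin d => Icc (-1:ℝ) 1) := by
    ext x
    rw [mem_preimage, Set.mem_pi]
    simp only [mem_univ, forall_true_left, mem_Icc, K, mem_setOf_eq]
    exact forall_congr' fun i => abs_le
  rw [this]
  rw [Homeomorph.isCompact_preimage]
  exact isCompact_univ_pi fun _ => isCompact_Icc

lemma Q_subset_tr (n : Fin d → ℤ) :
    Q d n ⊆ tr ((EuclideanSpace.equiv (Fin d) ℝ).symm (fun i => (n i : ℝ) + 1/2)) (K d) := by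
  intro y hy
  set a : Vd d := (EuclideanSpace.equiv (Fin d) ℝ).symm (fun i => (n i : ℝ) + 1/2) with ha
  have haa : ∀ i, a i = (n i : ℝ) + 1/2 := fun i => rfl
  refine ⟨y - a, fun i => ?_, by show a + (y - a) = y; rw [add_comm, sub_add_cancel]⟩
  have h1 := hy i
  rw [show (y - a) i = y i - a i from rfl, haa i]
  rw [abs_le]
  constructor <;> [linarith [h1.1]; linarith [h1.2]]

lemma lintegral_hdom_lt_top (ω : Measure (Vd d))
    (htb : ∀ K : Set (Vd d), IsCompact K → (⨆ a : Vd d, ω (tr a K)) < ⊤) :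
    ∫⁻ y, ∏ i, (min 1 (ENNReal.ofReal (π * |y i|))⁻¹) ^ 2 ∂ω < ⊤ := by
  set C : ℝ≥0∞ := ⨆ a : Vd d, ω (tr a (K d)) with hC
  have hCfin : C < ⊤ := htb _ isCompact_K
  have hωQ : ∀ n : Fin d → ℤ, ω (Q d n) ≤ C := fun n =>
    le_trans (measure_mono (Q_subset_tr n)) (le_iSup (fun a => ω (tr a (K d))) _)
  have key : ∀ (n : Fin d → ℤ) (y : Vd d), y ∈ Q d n →
      (∏ i, (min 1 (ENNReal.ofReal (π * |y i|))⁻¹) ^ 2) ≤ ∏ i, mz (n i) := by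
    intro n y hy
    refine Finset.prod_le_prod' fun i _ => ?_
    rw [mz]
    refine pow_le_pow_left' (min_le_min le_rfl
      (ENNReal.inv_le_inv.mpr (ENNReal.ofReal_le_ofReal ?_))) 2
    have h1 := hy i
    have habs : |(n i : ℝ)| - 1 ≤ |y i| := by
      rcases le_or_gt 0 ((n i : ℝ)) with h0 | h0
      · rw [_root_.abs_of_nonneg h0]
        have : (0:ℝ) ≤ y i := le_trans h0 h1.1
        rw [_root_.abs_of_nonneg this]; linarith [h1.1]
      · rw [_root_.abs_of_neg h0]
        have hyi : y i < 0 := by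
          have : (n i : ℝ) + 1 ≤ 0 := by
            have : (n i : ℤ) < 0 := by exact_mod_cast h0
            have : (n i : ℤ) + 1 ≤ 0 := this
            exact_mod_cast this
          linarith [h1.2]
        rw [_root_.abs_of_neg hyi]; linarith [h1.2]
    have hpi : |y i| ≤ π * |y i| := by
      nlinarith [Real.pi_gt_three, abs_nonneg (y i)]
    linarith
  calc ∫⁻ y, ∏ i, (min 1 (ENNReal.ofReal (π * |y i|))⁻¹) ^ 2 ∂ω
      = ∫⁻ y in ⋃ n : Fin d → ℤ, Q d n, ∏ i, (min 1 (ENNReal.ofReal (π * |y i|))⁻¹) ^ 2 ∂ω := by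
        rw [iUnion_Q, Measure.restrict_univ]
    _ = ∑' n : Fin d → ℤ, ∫⁻ y in Q d n, ∏ i, (min 1 (ENNReal.ofReal (π * |y i|))⁻¹) ^ 2 ∂ω :=
        lintegral_iUnion measurableSet_Q disjoint_Q _
    _ ≤ ∑' n : Fin d → ℤ, (∏ i, mz (n i)) * C := by
        refine ENNReal.tsum_le_tsum fun n => ?_
        calc ∫⁻ y in Q d n, ∏ i, (min 1 (ENNReal.ofReal (π * |y i|))⁻¹) ^ 2 ∂ω
            ≤ ∫⁻ _ in Q d n, (∏ i, mz (n i)) ∂ω :=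
              setLIntegral_mono measurable_const (key n)
          _ = (∏ i, mz (n i)) * ω (Q d n) := setLIntegral_const _ _
          _ ≤ (∏ i, mz (n i)) * C := by gcongr; exact hωQ n
    _ = (∑' k : ℤ, mz k) ^ d * C := by rw [ENNReal.tsum_mul_right, tsum_pi_prod]
    _ < ⊤ := ENNReal.mul_lt_top (ENNReal.pow_lt_top tsum_mz_lt_top) hCfin

end DKaux4

namespace DKaux5
open Complex Real DKaux DKaux2 DKaux3 DKaux4

variable {d : ℕ}

lemma continuous_char : Continuous (fun p : Vd d × Vd d => char p.1 p.2) := by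
  refine Complex.continuous_exp.comp ?_
  exact continuous_const.mul (Complex.continuous_ofReal.comp continuous_inner)

lemma meas_g (R : ℝ) : Measurable (fun y : Vd d => ∫ x in cube d R, char y x) := by
  have hsm : StronglyMeasurable (fun p : Vd d × Vd d =>
      Set.indicator (Set.univ ×ˢ cube d R) (fun p : Vd d × Vd d => char p.1 p.2) p) :=
    continuous_char.stronglyMeasurable.indicator
      (MeasurableSet.univ.prod (measurableSet_cube R))
  have h2 : StronglyMeasurable (fun y : Vd d => ∫ x : Vd d,
      Set.indicator (Set.univ ×ˢ cube d R) (fun p : Vd d × Vd d => char p.1 p.2) (y, x)) :=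
    hsm.integral_prod_right'
  have h3 : ∀ y : Vd d, (∫ x : Vd d,
      Set.indicator (Set.univ ×ˢ cube d R) (fun p : Vd d × Vd d => char p.1 p.2) (y, x))
      = ∫ x in cube d R, char y x := by
    intro y
    rw [← integral_indicator (measurableSet_cube R)]
    congr 1
    funext x
    by_cases hx : x ∈ cube d R
    · rw [indicator_of_mem hx, indicator_of_mem (by exact ⟨mem_univ y, hx⟩)]
    · rw [indicator_of_notMem hx, indicator_of_notMem (fun h => hx h.2)]
  simp_rw [h3] at h2
  exact h2.measurable

lemma integrand_zero (R : ℝ) (hR : 0 < R) :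
    ((((volume (cube d R)).toReal)⁻¹ • ∫ x in cube d R, char (0 : Vd d) x)
        - Set.indicator {0} (fun _ => (1 : ℂ)) (0 : Vd d)) = 0 := by
  have h1 : ∀ x : Vd d, char (0 : Vd d) x = 1 := by
    intro x
    rw [char, inner_zero_left]
    simp
  simp_rw [h1]
  rw [setIntegral_const]
  rw [indicator_of_mem (mem_singleton 0)]
  have hvol : ((volume (cube d R)).toReal) = R ^ d := by
    rw [volume_cube, ENNReal.toReal_pow, ENNReal.toReal_ofReal hR.le]
  rw [smul_smul, hvol, measureReal_def, hvol, inv_mul_cancel₀ (by positivity), one_smul, sub_self]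

lemma integrand_le (R : ℝ) (hR : 1 ≤ R) (y : Vd d) :
    (‖(((volume (cube d R)).toReal)⁻¹ • ∫ x in cube d R, char y x)
        - Set.indicator {0} (fun _ => (1 : ℂ)) y‖₊ : ℝ≥0∞) ^ 2
      ≤ ∏ i, (min 1 (ENNReal.ofReal (π * |y i|))⁻¹) ^ 2 := by
  rcases eq_or_ne y 0 with rfl | hy
  · rw [integrand_zero R (by linarith)]
    simp
  · rw [indicator_of_notMem (by simpa using hy), sub_zero]
    rw [Finset.prod_pow]
    refine pow_le_pow_left' ((g_nnnorm_le R (by linarith) y).trans ?_) 2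
    refine Finset.prod_le_prod' fun i _ => ?_
    refine min_le_min le_rfl (ENNReal.inv_le_inv.mpr (ENNReal.ofReal_le_ofReal ?_))
    have := abs_nonneg (y i)
    nlinarith [mul_nonneg (mul_nonneg Real.pi_pos.le (sub_nonneg.mpr hR)) this]

lemma nnnorm_le_single (R : ℝ) (hR : 0 < R) (y : Vd d) (j : Fin d) :
    (‖((volume (cube d R)).toReal)⁻¹ • ∫ x in cube d R, char y x‖₊ : ℝ≥0∞)
      ≤ min 1 (ENNReal.ofReal (π * R * |y j|))⁻¹ := by
  refine (g_nnnorm_le R hR y).trans ?_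
  rw [← Finset.mul_prod_erase Finset.univ _ (Finset.mem_univ j)]
  calc (min 1 (ENNReal.ofReal (π * R * |y j|))⁻¹)
        * ∏ i ∈ Finset.univ.erase j, min 1 (ENNReal.ofReal (π * R * |y i|))⁻¹
      ≤ (min 1 (ENNReal.ofReal (π * R * |y j|))⁻¹) * 1 := by
        refine mul_le_mul' le_rfl (Finset.prod_le_one (fun i _ => zero_le)
          (fun i _ => min_le_left _ _))
    _ = _ := mul_one _

end DKaux5

open Complex Real DKaux DKaux2 DKaux3 DKaux4 DKaux5

/-- For a positive translation-bounded measure `ω` on `ℝ^d`, the functions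
`g_R(y) = ℓ(C_R)⁻¹ ∫_{C_R} e^{2πi y·x} dx` converge to `1_{{0}}` in `L²(ℝ^d, ω)` as `R → ∞`. -/
theorem dirichlet_kernel_to_indicator {d : ℕ} (hd : 0 < d) (ω : Measure (Vd d))
    (htb : ∀ K : Set (Vd d), IsCompact K → (⨆ a : Vd d, ω (tr a K)) < ⊤) :
    Tendsto (fun R : ℝ => ∫⁻ y,
        (‖(((volume (cube d R)).toReal)⁻¹ • ∫ x in cube d R, char y x)
            - Set.indicator {0} (fun _ => (1 : ℂ)) y‖₊ : ℝ≥0∞) ^ 2 ∂ω)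
      atTop (𝓝 0) := by
  classical
  set F : ℝ → Vd d → ℝ≥0∞ := fun R y =>
    (‖(((volume (cube d R)).toReal)⁻¹ • ∫ x in cube d R, char y x)
        - Set.indicator {0} (fun _ => (1 : ℂ)) y‖₊ : ℝ≥0∞) ^ 2 with hFdef
  have hFmeas : ∀ R : ℝ, Measurable (F R) := by
    intro R
    have hm : Measurable (fun y : Vd d => (((volume (cube d R)).toReal)⁻¹ • ∫ x in cube d R, char y x)
        - Set.indicator {0} (fun _ => (1 : ℂ)) y) := Measurable.sub
      (f := fun y => ((volume (cube d R)).toReal)⁻¹ • ∫ x in cube d R, char y x)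
      (g := fun y => Set.indicator {0} (fun _ => (1 : ℂ)) y)
      (by have h := (meas_g (d := d) R).const_smul (((volume (cube d R)).toReal)⁻¹); exact h)
      (measurable_const.indicator (measurableSet_singleton (0 : Vd d)))
    exact (hm.nnnorm.coe_nnreal_ennreal).pow_const 2
  refine Filter.tendsto_iff_seq_tendsto.mpr fun s hs => ?_
  set u : ℕ → ℝ := fun n => max (s n) 1 with hu
  have hu1 : ∀ n, 1 ≤ u n := fun n => le_max_right _ _
  have hutop : Tendsto u atTop atTop :=
    tendsto_atTop_mono (fun n => le_max_left _ _) hs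
  have hcongr : (fun n => ∫⁻ y, F (u n) y ∂ω) =ᶠ[atTop] fun n => ∫⁻ y, F (s n) y ∂ω :=
    (hs.eventually_ge_atTop 1).mono fun n hn => by
      simp only [hu, max_eq_left hn]
  refine Tendsto.congr' hcongr ?_
  rw [show (𝓝 (0:ℝ≥0∞)) = 𝓝 (∫⁻ _, (0:ℝ≥0∞) ∂ω) by rw [lintegral_zero]]
  refine tendsto_lintegral_of_dominated_convergence
    (fun y => ∏ i, (min 1 (ENNReal.ofReal (π * |y i|))⁻¹) ^ 2)
    (fun n => hFmeas (u n))
    (fun n => ae_of_all _ fun y => integrand_le (u n) (hu1 n) y)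
    (lintegral_hdom_lt_top ω htb).ne
    (ae_of_all _ fun y => ?_)
  rcases eq_or_ne y 0 with rfl | hy
  · have hzero : ∀ n, F (u n) 0 = 0 := fun n => by
      rw [hFdef]
      simp only []
      rw [integrand_zero (u n) (by linarith [hu1 n])]
      simp
    simp_rw [hzero]
    exact tendsto_const_nhds
  · obtain ⟨j, hj⟩ : ∃ j, y j ≠ 0 := by
      by_contra h
      push_neg at h
      exact hy (by ext i; simpa using h i)
    have hb : ∀ n, F (u n) y ≤ ((ENNReal.ofReal (π * u n * |y j|))⁻¹) ^ 2 := by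
      intro n
      rw [hFdef]
      simp only []
      rw [indicator_of_notMem (by simpa using hy), sub_zero]
      refine pow_le_pow_left' ((nnnorm_le_single (u n) (by linarith [hu1 n]) y j).trans
        (min_le_right _ _)) 2
    have h1 : Tendsto (fun n => π * u n * |y j|) atTop atTop := by
      exact (hutop.const_mul_atTop Real.pi_pos).atTop_mul_const (abs_pos.mpr hj)
    have h2 : Tendsto (fun n => ENNReal.ofReal (π * u n * |y j|)) atTop (𝓝 ⊤) :=
      ENNReal.tendsto_ofReal_atTop.comp h1
    have h3 : Tendsto (fun n => (ENNReal.ofReal (π * u n * |y j|))⁻¹) atTop (𝓝 0) := by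
      have := ENNReal.tendsto_inv_iff.mpr h2
      rwa [ENNReal.inv_top] at this
    have h4 : Tendsto (fun n => ((ENNReal.ofReal (π * u n * |y j|))⁻¹) ^ 2) atTop (𝓝 0) := by
      simpa using ENNReal.Tendsto.pow (n := 2) h3
    exact tendsto_of_tendsto_of_tendsto_of_le_of_le tendsto_const_nhds h4
      (fun n => zero_le) hb
end
end
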